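/- arXiv:1610.07680 — 5 statements merged into one kernel-verified Lean document; each statement's English description precedes it below -/
import Mathlib

section
/- Let $A$ be an $n \times n$ invertible matrix with integer entries all bounded in absolute value by $M$. If $Ax = b$ for vectors $x, b \in \mathbb{C}^n$, then $\|x\|_\infty \leq M^{n-1} n^{n/2} \|b\|_\infty$. -/
open Matrix Finset ComplexOrder

-- key: scaled Hadamard via AM-GM on Gram eigenvalues
lemma key (n : ℕ) (hn : 0 < n) (S : Matrix (Fin n) (Fin n) ℂ)
    (h : ∑ j, ∑ i, ‖S i j‖ ^ 2 ≤ (n : ℝ)) : ‖S.det‖ ≤ 1 := by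
  set G := Sᴴ * S with hGdef
  have hG : G.PosSemidef := posSemidef_conjTranspose_mul_self S
  have hH : G.IsHermitian := hG.1
  set μ := hH.eigenvalues with hμdef
  have hμ0 : ∀ i, 0 ≤ μ i := hG.eigenvalues_nonneg
  -- det G = ∏ μ
  have hdet : G.det = ((∏ i, μ i : ℝ) : ℂ) := by
    rw [hH.det_eq_prod_eigenvalues]; push_cast; rfl
  -- det G = ‖det S‖ ^ 2
  have hdet2 : G.det = ((‖S.det‖ ^ 2 : ℝ) : ℂ) := by
    rw [hGdef, det_mul, det_conjTranspose, Complex.star_def, mul_comm, Complex.mul_conj,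
      Complex.normSq_eq_norm_sq]
  -- trace G = ∑ μ
  have htr : G.trace = ((∑ i, μ i : ℝ) : ℂ) := by
    conv_lhs => rw [hH.spectral_theorem]
    rw [Unitary.conjStarAlgAut_apply, trace_mul_cycle, Matrix.mem_unitaryGroup_iff'.mp hH.eigenvectorUnitary.2, one_mul,
      trace_diagonal]
    push_cast; rfl
  -- trace G = sum of squares
  have htr2 : G.trace = ((∑ j, ∑ i, ‖S i j‖ ^ 2 : ℝ) : ℂ) := by
    have hdiag : ∀ j, G j j = ((∑ i, ‖S i j‖ ^ 2 : ℝ) : ℂ) := by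
      intro j
      simp only [hGdef, mul_apply, conjTranspose_apply, Complex.star_def]
      push_cast
      congr 1
      ext i
      rw [mul_comm, Complex.mul_conj, Complex.normSq_eq_norm_sq]
      norm_num
    rw [Matrix.trace]
    simp only [Matrix.diag, hdiag]
    push_cast
    rfl
  have hsum : ∑ i, μ i ≤ (n : ℝ) := by
    have := htr.symm.trans htr2
    rw [Complex.ofReal_inj] at this
    rw [this]; exact h
  -- AM-GM
  have hprod : ∏ i, μ i ≤ 1 := by
    have hw : ∑ _i : Fin n, (1 / n : ℝ) = 1 := by
      simp [Finset.sum_const, Fintype.card_fin]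
      field_simp
    have amgm := Real.geom_mean_le_arith_mean_weighted Finset.univ
      (fun _ => (1 / n : ℝ)) μ (fun i _ => by positivity) hw (fun i _ => hμ0 i)
    have h1 : ∑ i, (1 / n : ℝ) * μ i ≤ 1 := by
      rw [← Finset.mul_sum]
      rw [div_mul_eq_mul_div, one_mul, div_le_one (by positivity)]
      exact hsum
    have h2 : (∏ i, μ i ^ (1 / n : ℝ)) ≤ 1 := le_trans amgm h1
    have h3 : (∏ i, μ i ^ (1 / n : ℝ)) ^ n ≤ 1 :=
      pow_le_one₀ (Finset.prod_nonneg fun i _ => Real.rpow_nonneg (hμ0 i) _) h2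
    calc ∏ i, μ i = (∏ i, μ i ^ (1 / n : ℝ)) ^ n := by
          rw [← Finset.prod_pow]
          congr 1; ext i
          rw [← Real.rpow_natCast (μ i ^ (1/n:ℝ)) n, ← Real.rpow_mul (hμ0 i)]
          rw [one_div, inv_mul_cancel₀ (by positivity : (n:ℝ) ≠ 0), Real.rpow_one]
      _ ≤ 1 := h3
  have : ‖S.det‖ ^ 2 ≤ 1 := by
    have := hdet.symm.trans hdet2
    rw [Complex.ofReal_inj] at this
    rw [← this]; exact hprod
  nlinarith [norm_nonneg S.det]

theorem stmt1 (n : ℕ) (A : Matrix (Fin n) (Fin n) ℂ) (M : ℝ)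
    (hint : ∀ i j, ∃ z : ℤ, A i j = (z : ℂ))
    (hM : ∀ i j, ‖A i j‖ ≤ M)
    (hA : IsUnit A.det)
    (x b : Fin n → ℂ) (hxb : A.mulVec x = b)
    (B : ℝ) (hB : ∀ j, ‖b j‖ ≤ B) :
    ∀ i, ‖x i‖ ≤ M ^ (n - 1) * (n : ℝ) ^ ((n : ℝ) / 2) * B := by
  intro i0
  rcases Nat.eq_zero_or_pos n with hn | hn
  · exact absurd i0.isLt (by omega)
  -- det A is a nonzero integer, so ‖det A‖ ≥ 1
  have hdetnz : A.det ≠ 0 := hA.ne_zero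
  have hAdet1 : (1 : ℝ) ≤ ‖A.det‖ := by
    choose z hz using hint
    have hAeq : A = (Matrix.of z).map (Int.castRingHom ℂ) := by
      ext i j; exact hz i j
    have hd : A.det = ((Matrix.of z).det : ℤ) := by
      rw [hAeq, ← RingHom.mapMatrix_apply, ← RingHom.map_det]; rfl
    have hz0 : (Matrix.of z).det ≠ 0 := by
      intro h; apply hdetnz; rw [hd, h]; simp
    rw [hd]
    rw [Complex.norm_intCast]
    exact_mod_cast Int.one_le_abs hz0
  -- Cramer's rule
  have hcramer : A.det * x i0 = (A.updateCol i0 b).det := by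
    have h1 : A.adjugate *ᵥ b = A.det • x := by
      rw [← hxb, Matrix.mulVec_mulVec, Matrix.adjugate_mul, Matrix.smul_mulVec,
        Matrix.one_mulVec]
    have h2 : Matrix.cramer A b i0 = (A.updateCol i0 b).det := Matrix.cramer_apply A b i0
    rw [← h2, Matrix.cramer_eq_adjugate_mulVec, h1]
    rfl
  set C := A.updateCol i0 b with hC
  have hxle : ‖x i0‖ ≤ ‖C.det‖ := by
    calc ‖x i0‖ ≤ ‖A.det‖ * ‖x i0‖ := le_mul_of_one_le_left (norm_nonneg _) hAdet1
      _ = ‖C.det‖ := by rw [← norm_mul, hcramer]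
  -- basic positivity facts
  have hM0 : 0 < M := by
    rcases lt_or_ge 0 M with h | h
    · exact h
    · exfalso
      have hA0 : A = 0 := by
        ext i j
        exact norm_le_zero_iff.mp (le_trans (hM i j) h)
      rw [hA0, (haveI : Nonempty (Fin n) := ⟨i0⟩; Matrix.det_zero)] at hA
      simp at hA
  have hB0 : 0 ≤ B := le_trans (norm_nonneg _) (hB i0)
  rcases eq_or_lt_of_le hB0 with hBz | hBpos
  · -- B = 0 : b = 0, det C = 0
    have hb0 : b = 0 := by
      ext j; exact norm_le_zero_iff.mp (by rw [hBz]; exact hB j)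
    have : C.det = 0 := by
      apply Matrix.det_eq_zero_of_column_eq_zero i0
      intro i; simp [hC, hb0]
    rw [← hBz, mul_zero]
    simpa [this] using hxle
  -- main case: B > 0
  have hsq : (0:ℝ) < Real.sqrt n := Real.sqrt_pos.mpr (by exact_mod_cast hn)
  set r : Fin n → ℝ := fun j => if j = i0 then B * Real.sqrt n else M * Real.sqrt n with hr
  have hrpos : ∀ j, 0 < r j := by
    intro j; rw [hr]; dsimp only
    split
    · positivity
    · positivity
  set S : Matrix (Fin n) (Fin n) ℂ := Matrix.of fun i j => ((r j : ℝ) : ℂ)⁻¹ * C i j with hS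
  have hCS : C = Matrix.of fun i j => ((r j : ℝ) : ℂ) * S i j := by
    ext i j
    simp only [hS, Matrix.of_apply]
    rw [← mul_assoc, mul_inv_cancel₀ (by exact_mod_cast (hrpos j).ne'), one_mul]
  -- column sums of squares for S
  have hScol : ∀ j, ∑ i, ‖S i j‖ ^ 2 ≤ 1 := by
    intro j
    have hCb : ∀ i, ‖C i j‖ ^ 2 ≤ (r j / Real.sqrt n) ^ 2 := by
      intro i
      have hb : ‖C i j‖ ≤ r j / Real.sqrt n := by
        rcases eq_or_ne j i0 with h | h
        · have hCe : C i j = b i := by rw [hC, Matrix.updateCol_apply, if_pos h]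
          have hrj : r j = B * Real.sqrt n := by rw [hr]; dsimp only; rw [if_pos h]
          rw [hCe, hrj, mul_div_assoc, div_self hsq.ne', mul_one]
          exact hB i
        · have hCe : C i j = A i j := by rw [hC, Matrix.updateCol_apply, if_neg h]
          have hrj : r j = M * Real.sqrt n := by rw [hr]; dsimp only; rw [if_neg h]
          rw [hCe, hrj, mul_div_assoc, div_self hsq.ne', mul_one]
          exact hM i j
      exact pow_le_pow_left₀ (norm_nonneg _) hb 2
    have : ∑ i, ‖S i j‖ ^ 2 = (∑ i, ‖C i j‖ ^ 2) / (r j) ^ 2 := by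
      rw [Finset.sum_div]
      congr 1; ext i
      simp only [hS, Matrix.of_apply, norm_mul, mul_pow, norm_inv, Complex.norm_real,
        Real.norm_eq_abs, abs_of_pos (hrpos j)]
      rw [inv_pow, inv_mul_eq_div]
    rw [this, div_le_one (by positivity)]
    calc ∑ i, ‖C i j‖ ^ 2 ≤ ∑ _i : Fin n, (r j / Real.sqrt n) ^ 2 :=
          Finset.sum_le_sum fun i _ => hCb i
      _ = n * (r j / Real.sqrt n) ^ 2 := by rw [Finset.sum_const, Finset.card_univ,
          Fintype.card_fin, nsmul_eq_mul]
      _ = r j ^ 2 := by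
          rw [div_pow, Real.sq_sqrt (by positivity : (0:ℝ) ≤ (n:ℝ))]
          field_simp
  have hStotal : ∑ j, ∑ i, ‖S i j‖ ^ 2 ≤ (n : ℝ) := by
    calc ∑ j, ∑ i, ‖S i j‖ ^ 2 ≤ ∑ _j : Fin n, (1:ℝ) := Finset.sum_le_sum fun j _ => hScol j
      _ = n := by simp
  have hSdet : ‖S.det‖ ≤ 1 := key n hn S hStotal
  -- det C = (∏ r) * det S
  have hdetC : C.det = ((∏ j, r j : ℝ) : ℂ) * S.det := by
    conv_lhs => rw [hCS]
    rw [Matrix.det_mul_row]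
    push_cast
    rfl
  have hprodr : ∏ j, r j = M ^ (n - 1) * (n : ℝ) ^ ((n : ℝ) / 2) * B := by
    rw [← Finset.mul_prod_erase Finset.univ r (Finset.mem_univ i0)]
    have h1 : r i0 = B * Real.sqrt n := by rw [hr]; simp
    have h2 : ∏ j ∈ Finset.univ.erase i0, r j = (M * Real.sqrt n) ^ (n - 1) := by
      rw [Finset.prod_congr rfl (fun j hj => ?_), Finset.prod_const,
        Finset.card_erase_of_mem (Finset.mem_univ i0), Finset.card_univ, Fintype.card_fin]
      rw [hr]; simp [Finset.ne_of_mem_erase hj]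
    rw [h1, h2, mul_pow]
    have h3 : Real.sqrt n * Real.sqrt n ^ (n - 1) = (n : ℝ) ^ ((n : ℝ) / 2) := by
      rw [← pow_succ']
      have hn1 : n - 1 + 1 = n := Nat.succ_pred_eq_of_pos hn
      rw [hn1]
      rw [Real.sqrt_eq_rpow, ← Real.rpow_natCast ((n:ℝ) ^ ((1:ℝ)/2)) n,
        ← Real.rpow_mul (by positivity)]
      congr 1
      field_simp
    calc B * Real.sqrt n * (M ^ (n-1) * Real.sqrt n ^ (n-1))
        = M ^ (n-1) * (Real.sqrt n * Real.sqrt n ^ (n-1)) * B := by ring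
      _ = M ^ (n - 1) * (n : ℝ) ^ ((n : ℝ) / 2) * B := by rw [h3]
  calc ‖x i0‖ ≤ ‖C.det‖ := hxle
    _ = (∏ j, r j) * ‖S.det‖ := by
        rw [hdetC, norm_mul, Complex.norm_real, Real.norm_eq_abs,
          abs_of_pos (Finset.prod_pos fun j _ => hrpos j)]
    _ ≤ (∏ j, r j) * 1 := by
        apply mul_le_mul_of_nonneg_left hSdet (le_of_lt (Finset.prod_pos fun j _ => hrpos j))
    _ = M ^ (n - 1) * (n : ℝ) ^ ((n : ℝ) / 2) * B := by rw [mul_one, hprodr]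
end

section
/- For every $n \in \mathbb{N}$ and every interval $J \subseteq [0, 2\pi]$, the function $D_n(\theta) = \sum_{r=0}^n \cos(r\theta)$ satisfies $\left| \int_J D_n(\theta)\, d\theta \right| \leq 10$. -/
open Real Finset

noncomputable def Ssum (n : ℕ) (x : ℝ) : ℝ := ∑ r ∈ Finset.Ioc 0 n, Real.sin (r * x) / r

lemma T_formula (x : ℝ) (m : ℕ) : ∀ k, m ≤ k →
    (∑ r ∈ Finset.Ioc m k, Real.sin (r * x)) * (2 * Real.sin (x / 2))
      = Real.cos ((m + 1/2) * x) - Real.cos ((k + 1/2) * x) := by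
  intro k hk
  induction k, hk using Nat.le_induction with
  | base => simp
  | succ k hk ih =>
    rw [Finset.sum_Ioc_succ_top hk, add_mul, ih]
    have h : Real.cos ((k + 1/2) * x) - Real.cos ((k + 1 + 1/2) * x)
        = Real.sin ((k + 1 : ℕ) * x) * (2 * Real.sin (x / 2)) := by
      rw [Real.cos_sub_cos]
      push_cast
      rw [show ((k:ℝ) + 1/2) * x - ((k:ℝ) + 1 + 1/2) * x = -x by ring,
        show (-x : ℝ)/2 = -(x/2) by ring,
        show (((k:ℝ) + 1/2) * x + ((k:ℝ) + 1 + 1/2) * x) / 2 = ((k:ℝ)+1) * x by ring,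
        Real.sin_neg]
      ring
    push_cast at h ⊢
    linarith

lemma T_bound {x : ℝ} (hs : 0 < Real.sin (x / 2)) (m k : ℕ) (hk : m ≤ k) :
    |∑ r ∈ Finset.Ioc m k, Real.sin (r * x)| ≤ 1 / Real.sin (x / 2) := by
  have h := T_formula x m k hk
  have h2 : |∑ r ∈ Finset.Ioc m k, Real.sin (r * x)| * (2 * Real.sin (x / 2)) ≤ 2 := by
    rw [← abs_of_pos (show (0:ℝ) < 2 * Real.sin (x/2) by linarith), ← abs_mul, h]
    calc |Real.cos ((m + 1/2) * x) - Real.cos ((k + 1/2) * x)|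
        ≤ |Real.cos ((m + 1/2) * x)| + |Real.cos ((k + 1/2) * x)| := abs_sub _ _
      _ ≤ 1 + 1 := add_le_add (Real.abs_cos_le_one _) (Real.abs_cos_le_one _)
      _ = 2 := by norm_num
  rw [le_div_iff₀ hs]
  linarith

lemma abel_identity (x : ℝ) (m : ℕ) : ∀ n, m ≤ n →
    ∑ r ∈ Finset.Ioc m n, Real.sin (r * x) / r
      = (∑ k ∈ Finset.Ioc m n,
          (∑ r ∈ Finset.Ioc m k, Real.sin (r * x)) * (1 / k - 1 / (k + 1)))
        + (∑ r ∈ Finset.Ioc m n, Real.sin (r * x)) / (n + 1) := by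
  intro n hn
  induction n, hn using Nat.le_induction with
  | base => simp
  | succ n hn ih =>
    rw [Finset.sum_Ioc_succ_top hn, Finset.sum_Ioc_succ_top hn,
      Finset.sum_Ioc_succ_top hn (fun r : ℕ => Real.sin (r * x)), ih]
    have hn1 : ((n:ℝ) + 1) ≠ 0 := by positivity
    have hn2 : ((n:ℝ) + 1 + 1) ≠ 0 := by positivity
    push_cast
    ring

lemma telescope (m : ℕ) : ∀ n, m ≤ n →
    ∑ k ∈ Finset.Ioc m n, ((1:ℝ) / k - 1 / (k + 1)) = 1 / (m + 1) - 1 / (n + 1) := by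
  intro n hn
  induction n, hn using Nat.le_induction with
  | base => simp
  | succ n hn ih =>
    rw [Finset.sum_Ioc_succ_top hn, ih]
    push_cast
    ring

lemma B_bound {x : ℝ} (hs : 0 < Real.sin (x / 2)) {m n : ℕ} (hmn : m ≤ n) :
    |∑ r ∈ Finset.Ioc m n, Real.sin (r * x) / r| ≤ (1 / Real.sin (x / 2)) * (1 / (m + 1)) := by
  set C := 1 / Real.sin (x / 2) with hC
  have hC0 : 0 ≤ C := by positivity
  rw [abel_identity x m n hmn]
  have h1 : |∑ k ∈ Finset.Ioc m n,
      (∑ r ∈ Finset.Ioc m k, Real.sin (r * x)) * (1 / k - 1 / (k + 1))|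
      ≤ C * (1 / (m + 1) - 1 / (n + 1)) := by
    calc |∑ k ∈ Finset.Ioc m n,
        (∑ r ∈ Finset.Ioc m k, Real.sin (r * x)) * (1 / k - 1 / (k + 1))|
        ≤ ∑ k ∈ Finset.Ioc m n,
          |(∑ r ∈ Finset.Ioc m k, Real.sin (r * x)) * (1 / k - 1 / (k + 1))| :=
          Finset.abs_sum_le_sum_abs _ _
      _ ≤ ∑ k ∈ Finset.Ioc m n, C * ((1:ℝ) / k - 1 / (k + 1)) := by
          apply Finset.sum_le_sum
          intro k hk
          rw [Finset.mem_Ioc] at hk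
          have hk0 : 0 < k := lt_of_le_of_lt (Nat.zero_le m) hk.1
          have hd : (0:ℝ) ≤ 1 / k - 1 / (k + 1) := by
            rw [sub_nonneg]
            apply one_div_le_one_div_of_le
            · exact_mod_cast hk0
            · push_cast; linarith
          rw [abs_mul, abs_of_nonneg hd]
          exact mul_le_mul_of_nonneg_right (T_bound hs m k (le_of_lt hk.1)) hd
      _ = C * (1 / (m + 1) - 1 / (n + 1)) := by
          rw [← Finset.mul_sum, telescope m n hmn]
  have h2 : |(∑ r ∈ Finset.Ioc m n, Real.sin (r * x)) / (n + 1)|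
      ≤ C * (1 / (n + 1)) := by
    rw [abs_div, abs_of_pos (show (0:ℝ) < (n:ℝ) + 1 by positivity), div_eq_mul_one_div]
    exact mul_le_mul_of_nonneg_right (T_bound hs m n hmn) (by positivity)
  calc |_ + _| ≤ _ := abs_add_le _ _
    _ ≤ C * (1 / (m + 1) - 1 / (n + 1)) + C * (1 / (n + 1)) := add_le_add h1 h2
    _ = C * (1 / (m + 1)) := by ring

lemma Ssum_bound (n : ℕ) {x : ℝ} (hx0 : 0 ≤ x) (hxpi : x ≤ Real.pi) :
    -1 ≤ Ssum n x ∧ Ssum n x ≤ Real.pi + 1 := by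
  rcases eq_or_lt_of_le hx0 with h0 | hx0'
  · simp [Ssum, ← h0]
    positivity
  have hpi : 0 < Real.pi := Real.pi_pos
  set m := min n (Nat.floor (Real.pi / x)) with hm
  have hmn : m ≤ n := min_le_left _ _
  have hmfl : (m : ℝ) ≤ Real.pi / x := by
    have : m ≤ Nat.floor (Real.pi / x) := min_le_right _ _
    exact le_trans (Nat.cast_le.mpr this) (Nat.floor_le (by positivity))
  -- split
  have hsplit : Ssum n x = (∑ r ∈ Finset.Ioc 0 m, Real.sin (r * x) / r)
      + ∑ r ∈ Finset.Ioc m n, Real.sin (r * x) / r := by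
    rw [Ssum, Finset.sum_Ioc_consecutive _ (Nat.zero_le m) hmn]
  -- A bounds
  have hA0 : 0 ≤ ∑ r ∈ Finset.Ioc 0 m, Real.sin (r * x) / r := by
    apply Finset.sum_nonneg
    intro r hr
    rw [Finset.mem_Ioc] at hr
    have hrx : (r:ℝ) * x ≤ Real.pi := by
      have : (r:ℝ) ≤ Real.pi / x := le_trans (Nat.cast_le.mpr hr.2) hmfl
      calc (r:ℝ) * x ≤ (Real.pi / x) * x := by nlinarith
        _ = Real.pi := by field_simp
    have := Real.sin_nonneg_of_nonneg_of_le_pi (by positivity) hrx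
    positivity
  have hA1 : ∑ r ∈ Finset.Ioc 0 m, Real.sin (r * x) / r ≤ Real.pi := by
    calc ∑ r ∈ Finset.Ioc 0 m, Real.sin (r * x) / r
        ≤ ∑ _r ∈ Finset.Ioc 0 m, x := by
          apply Finset.sum_le_sum
          intro r hr
          rw [Finset.mem_Ioc] at hr
          have hr0 : (0:ℝ) < r := by exact_mod_cast hr.1
          rw [div_le_iff₀ hr0]
          calc Real.sin ((r:ℝ) * x) ≤ (r:ℝ) * x := Real.sin_le (by positivity)
            _ = x * r := by ring
      _ = m * x := by rw [Finset.sum_const, Nat.card_Ioc]; simp [nsmul_eq_mul]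
      _ ≤ Real.pi := by
          calc (m:ℝ) * x ≤ (Real.pi / x) * x := by nlinarith
            _ = Real.pi := by field_simp
  -- B bounds
  have hsin2 : 0 < Real.sin (x / 2) :=
    Real.sin_pos_of_pos_of_lt_pi (by linarith) (by linarith)
  have hB : |∑ r ∈ Finset.Ioc m n, Real.sin (r * x) / r| ≤ 1 := by
    rcases le_or_gt n (Nat.floor (Real.pi / x)) with hc | hc
    · have : m = n := min_eq_left hc
      simp [this]
    · have hmfl2 : m = Nat.floor (Real.pi / x) := min_eq_right (le_of_lt hc)
      have h1 : Real.pi / x < (m:ℝ) + 1 := by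
        rw [hmfl2]; exact Nat.lt_floor_add_one _
      have h2 : x / Real.pi ≤ Real.sin (x / 2) := by
        have := Real.mul_le_sin (x := x / 2) (by linarith) (by linarith)
        calc x / Real.pi = 2 / Real.pi * (x / 2) := by ring
          _ ≤ Real.sin (x / 2) := this
      calc |∑ r ∈ Finset.Ioc m n, Real.sin (r * x) / r|
          ≤ (1 / Real.sin (x / 2)) * (1 / (m + 1)) := B_bound hsin2 hmn
        _ ≤ 1 := by
            rw [div_mul_div_comm, one_mul, div_le_one (by positivity)]
            calc (1:ℝ) = (x / Real.pi) * (Real.pi / x) := by field_simp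
              _ ≤ Real.sin (x / 2) * ((m:ℝ) + 1) := by
                  apply mul_le_mul h2 (le_of_lt h1) (by positivity) (le_of_lt hsin2)
  rw [hsplit]
  rw [abs_le] at hB
  constructor <;> linarith [hB.1, hB.2]

lemma Ssum_symm (n : ℕ) (y : ℝ) : Ssum n (2 * Real.pi - y) = -Ssum n y := by
  rw [Ssum, Ssum, ← Finset.sum_neg_distrib]
  apply Finset.sum_congr rfl
  intro r _
  have h : (r:ℝ) * (2 * Real.pi - y) = -((r:ℝ) * y) + (r:ℤ) * (2 * Real.pi) := by
    push_cast; ring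
  rw [h, Real.sin_add_int_mul_two_pi, Real.sin_neg]
  ring

lemma G_hasDeriv (n : ℕ) (y : ℝ) :
    HasDerivAt (fun t => t + Ssum n t)
      (∑ r ∈ Finset.range (n + 1), Real.cos (r * y)) y := by
  have h1 : HasDerivAt (fun t : ℝ => t + Ssum n t)
      (1 + ∑ r ∈ Finset.Ioc 0 n, Real.cos (r * y)) y := by
    apply (hasDerivAt_id y).add
    unfold Ssum
    apply HasDerivAt.fun_sum
    intro r hr
    rw [Finset.mem_Ioc] at hr
    have hr0 : (r:ℝ) ≠ 0 := by exact_mod_cast Nat.pos_iff_ne_zero.mp hr.1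
    have h2 : HasDerivAt (fun t : ℝ => (r:ℝ) * t) r y := by
      simpa using (hasDerivAt_id y).const_mul (r:ℝ)
    have h3 := (Real.hasDerivAt_sin ((r:ℝ) * y)).comp y h2
    have h4 := h3.div_const (r:ℝ)
    simpa [mul_div_assoc, div_self hr0] using h4
  have h5 : ∑ r ∈ Finset.range (n + 1), Real.cos (r * y)
      = 1 + ∑ r ∈ Finset.Ioc 0 n, Real.cos (r * y) := by
    have he : Finset.range (n + 1) = insert 0 (Finset.Ioc 0 n) := by
      ext k
      simp only [Finset.mem_range, Finset.mem_insert, Finset.mem_Ioc, Nat.lt_succ_iff]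
      omega
    rw [he, Finset.sum_insert (by simp)]
    simp
  rw [h5]
  exact h1

lemma G_bounds (n : ℕ) {x : ℝ} (h0 : 0 ≤ x) (h2 : x ≤ 2 * Real.pi) :
    -1 ≤ x + Ssum n x ∧ x + Ssum n x ≤ 2 * Real.pi + 1 := by
  have hpi := Real.pi_pos
  rcases le_or_gt x Real.pi with hc | hc
  · have := Ssum_bound n h0 hc
    constructor <;> linarith [this.1, this.2]
  · have hy : Ssum n x = -Ssum n (2 * Real.pi - x) := by
      have := Ssum_symm n (2 * Real.pi - x)
      simp at this
      rw [← this]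
    have hb := Ssum_bound n (x := 2 * Real.pi - x) (by linarith) (by linarith)
    rw [hy]
    constructor <;> linarith [hb.1, hb.2]

theorem stmt4 (n : ℕ) (a b : ℝ) (ha : 0 ≤ a) (hab : a ≤ b) (hb : b ≤ 2 * Real.pi) :
    |∫ θ in a..b, ∑ r ∈ Finset.range (n + 1), Real.cos (r * θ)| ≤ 10 := by
  have hpi := Real.pi_pos
  have hcont : Continuous fun θ : ℝ => ∑ r ∈ Finset.range (n + 1), Real.cos (r * θ) := by
    apply continuous_finset_sum
    intro r _
    exact (Real.continuous_cos.comp (continuous_const.mul continuous_id))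
  have hFTC : (∫ θ in a..b, ∑ r ∈ Finset.range (n + 1), Real.cos (r * θ))
      = (b + Ssum n b) - (a + Ssum n a) := by
    apply intervalIntegral.integral_eq_sub_of_hasDerivAt
    · intro y _
      exact G_hasDeriv n y
    · exact hcont.intervalIntegrable a b
  rw [hFTC]
  have hga := G_bounds n ha (by linarith)
  have hgb := G_bounds n (by linarith : (0:ℝ) ≤ b) hb
  have hpi4 := Real.pi_le_four
  rw [abs_le]
  constructor <;> linarith [hga.1, hga.2, hgb.1, hgb.2]
end

section
/- Let $f$ be a trigonometric polynomial and $k \in \mathbb{N}$, and let $S_k(\theta) = \prod_{r=1}^k (1 - e^{ir\theta})$. If the sequence of Fourier coefficients $(\hat{f}(r))_{r \in [N, M]}$ is periodic with period $p \leq k$ (i.e., $\hat{f}(r + p) = \hat{f}(r)$ whenever $r, r + p \in [N, M]$), then the product $S_k f$ satisfies $\widehat{S_k f}(r) = 0$ for all $r \in [N + \deg(S_k), M]$, where $\deg(S_k) = k(k+1)/2$. -/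
instance : Fact (0 < 2 * Real.pi) := ⟨by positivity⟩

open MeasureTheory Finset AddCircle

section helpers

variable {T : ℝ} [hT : Fact (0 < T)]

lemma myIntegral_fourier (j : ℤ) :
    ∫ t : AddCircle T, fourier j t ∂haarAddCircle = if j = 0 then 1 else 0 := by
  split_ifs with h
  · subst h
    have : ⇑(@fourier T 0) = (fun _ => 1 : AddCircle T → ℂ) := by ext1; exact fourier_zero
    rw [this, integral_const]; simp
  · exact integral_eq_zero_of_add_right_eq_neg (μ := haarAddCircle)
      (fourier_add_half_inv_index h hT.out)

lemma myFourierCoeff_fourier (m n : ℤ) :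
    fourierCoeff (⇑(fourier m) : AddCircle T → ℂ) n = if m = n then 1 else 0 := by
  unfold fourierCoeff
  simp_rw [smul_eq_mul, ← fourier_add]
  rw [myIntegral_fourier]
  simp only [neg_add_eq_zero]
  split_ifs with h1 h2 h2 <;> simp_all

lemma myCont_integrable {g : AddCircle T → ℂ} (hg : Continuous g) :
    Integrable g haarAddCircle :=
  hg.integrable_of_hasCompactSupport
    (IsCompact.of_isClosed_subset isCompact_univ (isClosed_tsupport g) (Set.subset_univ _))

lemma myFourierCoeff_sum {ι : Type*} (A : Finset ι) (g : ι → AddCircle T → ℂ)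
    (hg : ∀ i ∈ A, Continuous (g i)) (n : ℤ) :
    fourierCoeff (fun x => ∑ i ∈ A, g i x) n = ∑ i ∈ A, fourierCoeff (g i) n := by
  unfold fourierCoeff
  simp_rw [smul_eq_mul, Finset.mul_sum]
  rw [integral_finset_sum]
  intro i hi
  exact myCont_integrable ((map_continuous _).mul (hg i hi))

lemma myProd_fourier {ι : Type*} (B : Finset ι) (g : ι → ℤ) (x : AddCircle T) :
    ∏ j ∈ B, fourier (g j) x = fourier (∑ j ∈ B, g j) x := by
  induction B using Finset.cons_induction with
  | empty => simp [fourier_zero]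
  | cons a B ha ih => rw [Finset.prod_cons, Finset.sum_cons, fourier_add, ih]

lemma myProd_neg {ι : Type*} (u : Finset ι) (a : ι → ℂ) :
    ∏ j ∈ u, -(a j) = (-1) ^ u.card * ∏ j ∈ u, a j := by
  induction u using Finset.cons_induction with
  | empty => simp
  | cons x u hx ih =>
    rw [Finset.prod_cons, Finset.prod_cons, ih, Finset.card_cons, pow_succ]
    ring

lemma myProd_one_sub_fourier (J : Finset ℕ) (x : AddCircle T) :
    ∏ j ∈ J, (1 - fourier (j : ℤ) x) =
      ∑ B ∈ J.powerset, (-1) ^ B.card * fourier (∑ j ∈ B, (j : ℤ)) x := by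
  have : ∀ j ∈ J, (1 : ℂ) - fourier (j : ℤ) x = -(fourier (j : ℤ) x) + 1 := by
    intro j _; ring
  rw [Finset.prod_congr rfl this, Finset.prod_add]
  refine Finset.sum_congr rfl fun B hB => ?_
  rw [Finset.prod_const_one, mul_one, ← myProd_fourier B (fun j => (j : ℤ)) x,
    myProd_neg]

end helpers

theorem stmt7 (k : ℕ) (hk : 1 ≤ k) (N M p : ℤ) (hNM : N < M) (hp : 1 ≤ p)
    (hpk : p ≤ (k : ℤ))
    (f : AddCircle (2 * Real.pi) → ℂ) (s : Finset ℤ) (c : ℤ → ℂ)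
    (hf : ∀ x, f x = ∑ r ∈ s, c r * fourier r x)
    (hper : ∀ r : ℤ, N ≤ r → r + p ≤ M → fourierCoeff f (r + p) = fourierCoeff f r) :
    ∀ r : ℤ, N + (k * (k + 1) : ℤ) / 2 ≤ r → r ≤ M →
      fourierCoeff (fun x => (∏ j ∈ Finset.Icc 1 k, (1 - fourier (j : ℤ) x)) * f x) r = 0 := by
  intro r hr1 hr2
  set p' : ℕ := p.toNat with hp'
  have hpp' : (p' : ℤ) = p := Int.toNat_of_nonneg (by omega)
  have hpmem : p' ∈ Finset.Icc 1 k := by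
    rw [Finset.mem_Icc]; omega
  set J : Finset ℕ := (Finset.Icc 1 k).erase p' with hJ
  set D : ℤ := ∑ j ∈ Finset.Icc 1 k, (j : ℤ) with hD
  -- Gauss sum: 2 * D = k * (k + 1)
  have hGauss : D * 2 = (k : ℤ) * (k + 1) := by
    have hins : Finset.range (k + 1) = insert 0 (Finset.Icc 1 k) := by
      ext j; simp [Finset.mem_range, Finset.mem_Icc]; omega
    have h0 : (0 : ℕ) ∉ Finset.Icc 1 k := by simp
    have hnat : (∑ j ∈ Finset.Icc 1 k, j) * 2 = (k + 1) * k := by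
      have := Finset.sum_range_id_mul_two (k + 1)
      rw [hins, Finset.sum_insert h0, zero_add] at this
      simpa using this
    have := congrArg (fun n : ℕ => (n : ℤ)) hnat
    push_cast at this
    rw [hD]
    push_cast
    rw [this]
    ring
  have hrD : N + D ≤ r := by
    have h2 : (k * (k + 1) : ℤ) / 2 = D := by
      rw [← hGauss, Int.mul_ediv_cancel _ (by norm_num)]
    rw [h2] at hr1
    exact hr1
  have hJsum : ∑ j ∈ J, (j : ℤ) = D - p := by
    have h : ((p' : ℤ) + ∑ x ∈ (Finset.Icc 1 k).erase p', (x : ℤ)) = ∑ x ∈ Finset.Icc 1 k, (x : ℤ) :=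
      Finset.add_sum_erase _ (fun j : ℕ => (j : ℤ)) hpmem
    rw [hJ, hD]
    omega
  -- Fourier coefficients of f
  have hfc : ∀ q : ℤ, fourierCoeff f q = ∑ n ∈ s, c n * (if n = q then 1 else 0) := by
    intro q
    have : f = fun x => ∑ n ∈ s, c n * fourier n x := funext hf
    rw [this, myFourierCoeff_sum s (fun n x => c n * fourier n x)
      (fun n _ => continuous_const.mul (map_continuous _)) q]
    exact Finset.sum_congr rfl fun n _ => by
      rw [fourierCoeff.const_mul, myFourierCoeff_fourier]
  -- pointwise expansion of the product
  have hpoint : ∀ x : AddCircle (2 * Real.pi),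
      (∏ j ∈ Finset.Icc 1 k, (1 - fourier (j : ℤ) x)) * f x =
      ∑ B ∈ J.powerset, ∑ n ∈ s, ((-1) ^ B.card * c n) *
        (fourier ((∑ j ∈ B, (j : ℤ)) + n) x - fourier ((p + ∑ j ∈ B, (j : ℤ)) + n) x) := by
    intro x
    rw [← Finset.mul_prod_erase _ _ hpmem, ← hJ, myProd_one_sub_fourier, hf x]
    rw [mul_assoc, Finset.sum_mul_sum, Finset.mul_sum]
    refine Finset.sum_congr rfl fun B hB => ?_
    rw [Finset.mul_sum]
    refine Finset.sum_congr rfl fun n hn => ?_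
    have e1 : fourier ((∑ j ∈ B, (j : ℤ)) + n) x
        = fourier (∑ j ∈ B, (j : ℤ)) x * fourier n x := fourier_add
    have e2 : fourier ((p + ∑ j ∈ B, (j : ℤ)) + n) x
        = fourier p x * (fourier (∑ j ∈ B, (j : ℤ)) x * fourier n x) := by
      rw [add_assoc, fourier_add (m := p), fourier_add]
    rw [e1, e2, hpp']
    ring
  have hfun : (fun x => (∏ j ∈ Finset.Icc 1 k, (1 - fourier (j : ℤ) x)) * f x) =
      fun x => ∑ B ∈ J.powerset, ∑ n ∈ s, ((-1) ^ B.card * c n) *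
        (fourier ((∑ j ∈ B, (j : ℤ)) + n) x - fourier ((p + ∑ j ∈ B, (j : ℤ)) + n) x) :=
    funext hpoint
  rw [hfun]
  rw [myFourierCoeff_sum _ _ (fun B _ => by
    exact continuous_finset_sum _ fun n _ =>
      continuous_const.mul ((map_continuous _).sub (map_continuous _)))]
  refine Finset.sum_eq_zero fun B hB => ?_
  rw [myFourierCoeff_sum s (fun n x => ((-1 : ℂ) ^ B.card * c n) *
      (fourier ((∑ j ∈ B, (j : ℤ)) + n) x - fourier ((p + ∑ j ∈ B, (j : ℤ)) + n) x)) (fun n _ =>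
    continuous_const.mul ((map_continuous _).sub (map_continuous _)))]
  set σ : ℤ := ∑ j ∈ B, (j : ℤ) with hσ
  have hσ0 : 0 ≤ σ := Finset.sum_nonneg fun j _ => Int.ofNat_nonneg j
  have hσD : σ ≤ D - p := by
    rw [← hJsum]
    exact Finset.sum_le_sum_of_subset_of_nonneg (Finset.mem_powerset.mp hB)
      (fun j _ _ => Int.ofNat_nonneg j)
  have key : ∀ n ∈ s,
      fourierCoeff (fun x : AddCircle (2 * Real.pi) => ((-1 : ℂ) ^ B.card * c n) *
        (fourier (σ + n) x - fourier ((p + σ) + n) x)) r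
      = ((-1 : ℂ) ^ B.card) * (c n * ((if σ + n = r then (1:ℂ) else 0)
          - (if (p + σ) + n = r then (1:ℂ) else 0))) := by
    intro n hn
    rw [fourierCoeff.const_mul]
    have : fourierCoeff (fun x : AddCircle (2 * Real.pi) => fourier (σ + n) x - fourier ((p + σ) + n) x) r
        = (if σ + n = r then (1:ℂ) else 0) - (if (p + σ) + n = r then (1:ℂ) else 0) := by
      unfold fourierCoeff
      simp_rw [smul_eq_mul, mul_sub]
      rw [integral_sub (f := fun t => fourier (-r) t * fourier (σ + n) t)
        (g := fun t => fourier (-r) t * fourier ((p + σ) + n) t)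
        (myCont_integrable ((map_continuous _).mul (map_continuous _)))
        (myCont_integrable ((map_continuous _).mul (map_continuous _)))]
      have h1 := myFourierCoeff_fourier (T := 2 * Real.pi) (σ + n) r
      have h2 := myFourierCoeff_fourier (T := 2 * Real.pi) ((p + σ) + n) r
      unfold fourierCoeff at h1 h2
      simp_rw [smul_eq_mul] at h1 h2
      rw [h1, h2]
    rw [this]; ring
  have hstep : ∑ n ∈ s, fourierCoeff (fun x : AddCircle (2 * Real.pi) => ((-1 : ℂ) ^ B.card * c n) *
      (fourier (σ + n) x - fourier ((p + σ) + n) x)) r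
      = ∑ n ∈ s, ((-1 : ℂ) ^ B.card) * (c n * ((if σ + n = r then (1:ℂ) else 0)
          - (if (p + σ) + n = r then (1:ℂ) else 0))) := Finset.sum_congr rfl key
  rw [hstep, ← Finset.mul_sum]
  have hzero : ∑ n ∈ s, c n * ((if σ + n = r then (1:ℂ) else 0)
      - (if (p + σ) + n = r then (1:ℂ) else 0)) = 0 := by
    simp_rw [mul_sub]
    rw [Finset.sum_sub_distrib]
    have e1 : ∑ n ∈ s, c n * (if σ + n = r then (1:ℂ) else 0)
        = fourierCoeff f (r - σ) := by
      rw [hfc (r - σ)]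
      exact Finset.sum_congr rfl fun n _ => by
        have hiff : (σ + n = r) ↔ (n = r - σ) := by omega
        simp only [hiff]
    have e2 : ∑ n ∈ s, c n * (if (p + σ) + n = r then (1:ℂ) else 0)
        = fourierCoeff f (r - p - σ) := by
      rw [hfc (r - p - σ)]
      exact Finset.sum_congr rfl fun n _ => by
        have hiff : ((p + σ) + n = r) ↔ (n = r - p - σ) := by omega
        simp only [hiff]
    rw [e1, e2]
    have := hper (r - p - σ) (by omega) (by omega)
    rw [show r - p - σ + p = r - σ by ring] at this
    rw [this, sub_self]
  rw [hzero, mul_zero]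
end

section
/- Let $R \subseteq \mathbb{C}$ be a finite set, and let $N, t \in \mathbb{N}$ satisfy $N \geq |R|^{t+1} + 3(t+1)$. Let $x = (x(r))_{r=1}^N \in R^N$. Suppose the non-zero vector $v = (C_0, \ldots, C_t) \in \mathbb{C}^{t+1}$ is orthogonal to every $(t+1)$-window $(x(1+r), \ldots, x(t+1+r))$, $0 \leq r \leq N - t - 1$, of $x$. Then there exist $l \leq t$, complex numbers $\alpha_1, \ldots, \alpha_l$, and roots of unity $\rho_1, \ldots, \rho_l$ which are zeros of $P(X) = C_0 + C_1 X + \cdots + C_t X^t$, such that $x(r) = \alpha_1 \rho_1^r + \cdots + \alpha_l \rho_l^r$ for all $r \in [t+1, N - (t+1)]$. -/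
open Finset


lemma aux_periodic (N t : ℕ) (R : Finset ℂ) (x C : ℕ → ℂ)
    (hN : R.card ^ (t + 1) + 3 * (t + 1) ≤ N)
    (hR : 1 ≤ R.card)
    (hx : ∀ n, 1 ≤ n → n ≤ N → x n ∈ R)
    (hC : ∃ j ≤ t, C j ≠ 0)
    (hrec : ∀ s, 1 ≤ s → s + t ≤ N → ∑ j ∈ Finset.range (t+1), C j * x (s + j) = 0) :
    ∃ p, 1 ≤ p ∧ p ≤ R.card ^ (t+1) ∧
      ∀ r, t + 1 ≤ r → r + p + t ≤ N → x r = x (r + p) := by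
  classical
  obtain ⟨j0, hj0t, hj0⟩ := hC
  set T := (Finset.range (t+1)).filter (fun j => C j ≠ 0) with hT
  have hTne : T.Nonempty := ⟨j0, by
    simp only [hT, Finset.mem_filter, Finset.mem_range]
    exact ⟨by omega, hj0⟩⟩
  set a := T.min' hTne with ha
  set b := T.max' hTne with hb
  have haT : a ∈ T := T.min'_mem hTne
  have hbT : b ∈ T := T.max'_mem hTne
  have hCa : C a ≠ 0 := (Finset.mem_filter.1 haT).2
  have hCb : C b ≠ 0 := (Finset.mem_filter.1 hbT).2
  have hbt : b ≤ t := by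
    have := (Finset.mem_filter.1 hbT).1
    simp only [Finset.mem_range] at this; omega
  have hab : a ≤ b := T.min'_le b hbT
  have hzero : ∀ j, j ≤ t → C j ≠ 0 → a ≤ j ∧ j ≤ b := by
    intro j hj hCj
    have hjT : j ∈ T := by
      simp only [hT, Finset.mem_filter, Finset.mem_range]; exact ⟨by omega, hCj⟩
    exact ⟨T.min'_le j hjT, T.le_max' j hjT⟩
  have hrec2 : ∀ s, 1 ≤ s → s + t ≤ N → ∑ j ∈ Finset.Icc a b, C j * x (s + j) = 0 := by
    intro s hs hsN
    rw [← hrec s hs hsN]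
    apply Finset.sum_subset
    · intro j hj; simp only [Finset.mem_Icc] at hj
      simp only [Finset.mem_range]; omega
    · intro j hjr hjn
      simp only [Finset.mem_range] at hjr
      simp only [Finset.mem_Icc, not_and_or, not_le] at hjn
      have hCj : C j = 0 := by
        by_contra h
        have := hzero j (by omega) h
        omega
      rw [hCj, zero_mul]
  set d := b - a with hd
  have hbad : b = a + d := by omega
  -- forward step
  have stepF : ∀ s p, 1 ≤ s → s + p + t ≤ N →
      (∀ j, a ≤ j → j < b → x (s + j) = x (s + j + p)) → x (s + b) = x (s + b + p) := by
    intro s p hs hsN hyp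
    have h1 := hrec2 s hs (by omega)
    have h2 := hrec2 (s + p) (by omega) (by omega)
    have h2' : ∑ j ∈ Finset.Icc a b, C j * x (s + j + p) = 0 := by
      rw [← h2]
      refine Finset.sum_congr rfl fun j _ => ?_
      have e : s + j + p = s + p + j := by omega
      rw [e]
    have h3 : ∑ j ∈ Finset.Icc a b, C j * (x (s + j) - x (s + j + p)) = 0 := by
      have : ∀ j ∈ Finset.Icc a b, C j * (x (s + j) - x (s + j + p))
          = C j * x (s + j) - C j * x (s + j + p) := fun j _ => by ring
      rw [Finset.sum_congr rfl this, Finset.sum_sub_distrib, h1, h2', sub_zero]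
    have h4 : ∑ j ∈ Finset.Icc a b, C j * (x (s + j) - x (s + j + p))
        = C b * (x (s + b) - x (s + b + p)) := by
      apply Finset.sum_eq_single_of_mem b (Finset.mem_Icc.2 ⟨hab, le_refl b⟩)
      intro j hj hne
      have hj' := Finset.mem_Icc.1 hj
      rw [hyp j hj'.1 (by omega), sub_self, mul_zero]
    rw [h4] at h3
    have := mul_eq_zero.1 h3
    rcases this with h | h
    · exact absurd h hCb
    · exact sub_eq_zero.1 h
  -- backward step
  have stepB : ∀ s p, 1 ≤ s → s + p + t ≤ N →
      (∀ j, a < j → j ≤ b → x (s + j) = x (s + j + p)) → x (s + a) = x (s + a + p) := by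
    intro s p hs hsN hyp
    have h1 := hrec2 s hs (by omega)
    have h2 := hrec2 (s + p) (by omega) (by omega)
    have h2' : ∑ j ∈ Finset.Icc a b, C j * x (s + j + p) = 0 := by
      rw [← h2]
      refine Finset.sum_congr rfl fun j _ => ?_
      have e : s + j + p = s + p + j := by omega
      rw [e]
    have h3 : ∑ j ∈ Finset.Icc a b, C j * (x (s + j) - x (s + j + p)) = 0 := by
      have : ∀ j ∈ Finset.Icc a b, C j * (x (s + j) - x (s + j + p))
          = C j * x (s + j) - C j * x (s + j + p) := fun j _ => by ring
      rw [Finset.sum_congr rfl this, Finset.sum_sub_distrib, h1, h2', sub_zero]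
    have h4 : ∑ j ∈ Finset.Icc a b, C j * (x (s + j) - x (s + j + p))
        = C a * (x (s + a) - x (s + a + p)) := by
      apply Finset.sum_eq_single_of_mem a (Finset.mem_Icc.2 ⟨le_refl a, hab⟩)
      intro j hj hne
      have hj' := Finset.mem_Icc.1 hj
      rw [hyp j (by omega) hj'.2, sub_self, mul_zero]
    rw [h4] at h3
    have := mul_eq_zero.1 h3
    rcases this with h | h
    · exact absurd h hCa
    · exact sub_eq_zero.1 h
  -- pigeonhole
  set K := R.card ^ (d + 1) + 1 with hK
  have hpow : R.card ^ (d + 1) ≤ R.card ^ (t + 1) := Nat.pow_le_pow_right hR (by omega)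
  have hKN : K + t ≤ N := by omega
  obtain ⟨n, hn, m, hm, hnm, hfe⟩ := Finset.exists_ne_map_eq_of_card_lt_of_maps_to
    (s := Finset.Icc 1 K) (t := Fintype.piFinset (fun _ : Fin (d+1) => R))
    (by
      rw [Nat.card_Icc, Fintype.card_piFinset]
      simp only [Finset.prod_const, Finset.card_univ, Fintype.card_fin]
      omega)
    (f := fun n (j : Fin (d+1)) => x (n + a + (j : ℕ)))
    (by
      intro n hn
      rw [Finset.mem_coe, Fintype.mem_piFinset]
      intro j
      have hj : (j : ℕ) ≤ d := by omega
      have hn' := Finset.mem_Icc.1 hn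
      exact hx _ (by omega) (by omega))
  -- order n < m wlog
  obtain ⟨n', m', hn1, hmK, hlt, hwin0⟩ :
      ∃ n' m', 1 ≤ n' ∧ m' ≤ K ∧ n' < m' ∧
        (∀ j, j ≤ d → x (n' + a + j) = x (m' + a + j)) := by
    have hn' := Finset.mem_Icc.1 hn
    have hm' := Finset.mem_Icc.1 hm
    rcases Nat.lt_or_ge n m with h | h
    · refine ⟨n, m, hn'.1, hm'.2, h, fun j hj => ?_⟩
      exact congrFun hfe ⟨j, by omega⟩
    · refine ⟨m, n, hm'.1, hn'.2, by omega, fun j hj => ?_⟩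
      exact (congrFun hfe ⟨j, by omega⟩).symm
  clear hfe hn hm hnm
  set p := m' - n' with hp
  have hp1 : 1 ≤ p := by omega
  have hm'e : m' = n' + p := by omega
  have hwin : ∀ j, j ≤ d → x (n' + a + j) = x (n' + a + j + p) := by
    intro j hj
    rw [hwin0 j hj]
    congr 1
    omega
  have hpK : n' + p ≤ K := by omega
  -- upward propagation
  have Up : ∀ s, n' ≤ s → s + p + t ≤ N → ∀ j, j ≤ d →
      x (s + a + j) = x (s + a + j + p) := by
    intro s hs
    induction s, hs using Nat.le_induction with
    | base => intro _ j hj; exact hwin j hj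
    | succ s hs ih =>
      intro hcond
      have hsmall : ∀ j, j < d → x (s + 1 + a + j) = x (s + 1 + a + j + p) := by
        intro j hj
        have e1 : s + 1 + a + j = s + a + (j + 1) := by omega
        have e2 : s + 1 + a + j + p = s + a + (j + 1) + p := by omega
        rw [e1]
        exact ih (by omega) (j + 1) (by omega)
      intro j hj
      rcases Nat.lt_or_ge j d with h | h
      · exact hsmall j h
      · have hjd : j = d := by omega
        subst hjd
        have e : s + 1 + a + d = s + 1 + b := by omega
        have e2 : s + 1 + a + d + p = s + 1 + b + p := by omega
        rw [e]
        apply stepF (s + 1) p (by omega) (by omega)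
        intro j' hj'a hj'b
        have e3 : s + 1 + j' = s + 1 + a + (j' - a) := by omega
        have e4 : s + 1 + j' + p = s + 1 + a + (j' - a) + p := by omega
        rw [e3]
        exact hsmall (j' - a) (by omega)
  -- downward propagation
  have Down : ∀ k, k < n' → ∀ j, j ≤ d →
      x ((n' - k) + a + j) = x ((n' - k) + a + j + p) := by
    intro k
    induction k with
    | zero => intro _ j hj; simpa using hwin j hj
    | succ k ih =>
      intro hk j hj
      have ihh := ih (by omega)
      have hcond : (n' - (k + 1)) + p + t ≤ N := by omega
      have hsmall : ∀ j', 0 < j' → j' ≤ d →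
          x ((n' - (k + 1)) + a + j') = x ((n' - (k + 1)) + a + j' + p) := by
        intro j' h0 hd'
        have e1 : (n' - (k + 1)) + a + j' = (n' - k) + a + (j' - 1) := by omega
        have e2 : (n' - (k + 1)) + a + j' + p = (n' - k) + a + (j' - 1) + p := by omega
        rw [e1]
        exact ihh (j' - 1) (by omega)
      rcases Nat.eq_zero_or_pos j with h0 | h0
      · subst h0
        have hstep := stepB (n' - (k + 1)) p (by omega) hcond ?_
        · have e1 : (n' - (k + 1)) + a + 0 = (n' - (k + 1)) + a := by omega
          have e2 : (n' - (k + 1)) + a + 0 + p = (n' - (k + 1)) + a + p := by omega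
          rw [e1]; exact hstep
        · intro j' hj'a hj'b
          have e3 : (n' - (k + 1)) + j' = (n' - (k + 1)) + a + (j' - a) := by omega
          have e4 : (n' - (k + 1)) + j' + p = (n' - (k + 1)) + a + (j' - a) + p := by omega
          rw [e3]
          exact hsmall (j' - a) (by omega) (by omega)
      · exact hsmall j h0 hj
  refine ⟨p, hp1, by omega, ?_⟩
  intro r hr hrN
  have hs1 : 1 ≤ r - a := by omega
  have e : (r - a) + a + 0 = r := by omega
  have e2 : (r - a) + a + 0 + p = r + p := by omega
  rcases le_or_gt n' (r - a) with h | h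
  · have := Up (r - a) h (by omega) 0 (by omega)
    rw [e] at this; exact this
  · have hk : n' - (n' - (r - a)) = r - a := by omega
    have := Down (n' - (r - a)) (by omega) 0 (by omega)
    rw [hk, e] at this; exact this


lemma aux_orth {ω : ℂ} {p : ℕ} (hp : 0 < p) (hω : IsPrimitiveRoot ω p) (m : ℤ) :
    ∑ k ∈ Finset.range p, ω ^ (m * (k : ℤ)) = if (p:ℤ) ∣ m then (p:ℂ) else 0 := by
  have h1 : ∀ k ∈ Finset.range p, ω ^ (m * (k:ℤ)) = (ω ^ m) ^ (k:ℕ) := by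
    intro k _; rw [zpow_mul, zpow_natCast]
  rw [Finset.sum_congr rfl h1]
  by_cases hd : (p:ℤ) ∣ m
  · rw [if_pos hd, (hω.zpow_eq_one_iff_dvd m).2 hd]
    simp
  · have hne : ω ^ m ≠ 1 := fun h => hd ((hω.zpow_eq_one_iff_dvd m).1 h)
    rw [geom_sum_eq hne, if_neg hd]
    have h2 : (ω ^ m) ^ p = 1 := by
      rw [← zpow_natCast (ω ^ m), ← zpow_mul, mul_comm, zpow_mul, zpow_natCast,
        hω.pow_eq_one, one_zpow]
    rw [h2]; simp

lemma aux_small_dvd {p : ℕ} (hp : 0 < p) {u v : ℕ} (hu : u < p) (hv : v < p)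
    (h : (p:ℤ) ∣ (u:ℤ) - (v:ℤ)) : u = v := by
  rcases h with ⟨e, hee⟩
  have hb1 : -(p:ℤ) < (u:ℤ) - (v:ℤ) := by
    have h1 : (v:ℤ) < p := by exact_mod_cast hv
    have h2 : (0:ℤ) ≤ (u:ℤ) := by positivity
    omega
  have hb2 : (u:ℤ) - (v:ℤ) < p := by
    have h1 : (u:ℤ) < p := by exact_mod_cast hu
    have h2 : (0:ℤ) ≤ (v:ℤ) := by positivity
    omega
  have hpz : (0:ℤ) < p := by exact_mod_cast hp
  have h0 : (u:ℤ) - (v:ℤ) = 0 := by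
    rcases lt_trichotomy e 0 with h | h | h
    · nlinarith
    · rw [h, mul_zero] at hee; omega
    · nlinarith
  have : (u:ℤ) = (v:ℤ) := by omega
  exact_mod_cast this

-- main Fourier lemma, assuming periodicity
set_option maxHeartbeats 2000000 in
lemma aux_fourier (N t p : ℕ) (x C : ℕ → ℂ)
    (hNp : p + 3 * (t + 1) ≤ N)
    (hp1 : 1 ≤ p)
    (hC : ∃ j ≤ t, C j ≠ 0)
    (hrec : ∀ s, 1 ≤ s → s + t ≤ N → ∑ j ∈ Finset.range (t+1), C j * x (s + j) = 0)
    (hper : ∀ r, t + 1 ≤ r → r + p + t ≤ N → x r = x (r + p)) :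
    ∃ l, l ≤ t ∧ ∃ α ρ : Fin l → ℂ,
      (∀ i, ∃ q, 1 ≤ q ∧ ρ i ^ q = 1) ∧
      (∀ i, ∑ j ∈ Finset.range (t + 1), C j * ρ i ^ j = 0) ∧
      (∀ r, t + 1 ≤ r → r ≤ N - (t + 1) → x r = ∑ i, α i * ρ i ^ r) := by
  classical
  have hp0 : 0 < p := hp1
  set ω := Complex.exp (2 * Real.pi * Complex.I / p) with hωdef
  have hω : IsPrimitiveRoot ω p := Complex.isPrimitiveRoot_exp p (by omega)
  have hω0 : ω ≠ 0 := hω.ne_zero (by omega)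
  have hpc : (p:ℂ) ≠ 0 := Nat.cast_ne_zero.2 (by omega)
  set c : ℕ → ℂ := fun k =>
    (p:ℂ)⁻¹ * ∑ s ∈ Finset.range p, x (t+1+s) * ω ^ (-((k:ℤ) * ((t+1+s : ℕ) : ℤ))) with hc
  -- iterated periodicity
  have hper_iter : ∀ k r, t + 1 ≤ r → r + k * p + t ≤ N → x r = x (r + k * p) := by
    intro k
    induction k with
    | zero => intro r _ _; simp
    | succ k ih =>
      intro r hr hN'
      have hkp : k * p ≤ (k+1) * p := Nat.mul_le_mul_right p (by omega)
      have he : r + k * p + p = r + (k+1) * p := by ring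
      have h1 := ih r hr (by omega)
      have h2 := hper (r + k * p) (by omega) (by omega)
      rw [h1, h2, he]
  -- inversion formula
  have claim1 : ∀ r, t + 1 ≤ r → r + (t+1) ≤ N →
      ∑ k ∈ Finset.range p, c k * (ω ^ k) ^ r = x r := by
    intro r hr hrN
    set s0 := (r - (t+1)) % p with hs0
    set q := (r - (t+1)) / p with hq
    have hs0p : s0 < p := Nat.mod_lt _ (by omega)
    have hmd : s0 + p * q = r - (t+1) := Nat.mod_add_div (r - (t+1)) p
    have hkey : r = (t+1+s0) + q * p := by
      have h : p * q = q * p := Nat.mul_comm p q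
      omega
    have hxr : x (t+1+s0) = x r := by
      have := hper_iter q (t+1+s0) (by omega) (by omega)
      rw [this]; congr 1; omega
    have hkeyZ : (r : ℤ) = (t+1+s0 : ℕ) + (q:ℤ) * p := by exact_mod_cast congrArg (Nat.cast (R := ℤ)) hkey
    have hsum : ∑ k ∈ Finset.range p, c k * (ω ^ k) ^ r
        = (p:ℂ)⁻¹ * ∑ s ∈ Finset.range p, x (t+1+s) *
            ∑ k ∈ Finset.range p, ω ^ (((r:ℤ) - ((t+1+s : ℕ) : ℤ)) * (k:ℤ)) := by
      have step1 : ∀ k ∈ Finset.range p, c k * (ω ^ k) ^ r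
          = ∑ s ∈ Finset.range p, (p:ℂ)⁻¹ *
              (x (t+1+s) * ω ^ (((r:ℤ) - ((t+1+s : ℕ) : ℤ)) * (k:ℤ))) := by
        intro k _
        rw [hc]
        simp only []
        rw [mul_comm ((p:ℂ)⁻¹) _, Finset.sum_mul, Finset.sum_mul]
        refine Finset.sum_congr rfl fun s _ => ?_
        have hpow : (ω ^ k) ^ r = ω ^ ((k:ℤ) * (r:ℤ)) := by
          rw [← pow_mul, ← zpow_natCast ω (k * r)]
          norm_cast
        have hexp : ω ^ (-((k:ℤ) * ((t+1+s:ℕ):ℤ))) * ω ^ ((k:ℤ) * (r:ℤ))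
            = ω ^ (((r:ℤ) - ((t+1+s:ℕ):ℤ)) * (k:ℤ)) := by
          rw [← zpow_add₀ hω0]; congr 1; ring
        rw [hpow, show (x (t+1+s) * ω ^ (-((k:ℤ) * ((t+1+s:ℕ):ℤ))) * (p:ℂ)⁻¹) * ω ^ ((k:ℤ) * (r:ℤ))
            = (p:ℂ)⁻¹ * (x (t+1+s) * (ω ^ (-((k:ℤ) * ((t+1+s:ℕ):ℤ))) * ω ^ ((k:ℤ) * (r:ℤ)))) from by ring,
          hexp]
      rw [Finset.sum_congr rfl step1, Finset.sum_comm, Finset.mul_sum]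
      refine Finset.sum_congr rfl fun s _ => ?_
      rw [Finset.mul_sum, Finset.mul_sum]
    rw [hsum]
    have hinner : ∀ s ∈ Finset.range p,
        x (t+1+s) * ∑ k ∈ Finset.range p, ω ^ (((r:ℤ) - ((t+1+s:ℕ):ℤ)) * (k:ℤ))
        = if s = s0 then x (t+1+s) * p else 0 := by
      intro s hs
      have hsp := Finset.mem_range.1 hs
      rw [aux_orth hp0 hω]
      have hdvd : ((p:ℤ) ∣ (r:ℤ) - ((t+1+s:ℕ):ℤ)) ↔ s = s0 := by
        have he : (r:ℤ) - ((t+1+s:ℕ):ℤ) = ((s0:ℤ) - (s:ℤ)) + (q:ℤ) * (p:ℤ) := by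
          rw [hkeyZ]; push_cast; ring
        rw [he, dvd_add_left (Dvd.intro_left (q:ℤ) rfl)]
        constructor
        · intro hdd
          have h1 : ((s0:ℤ) - (s:ℤ)) = 0 := by
            rcases hdd with ⟨e, hee⟩
            have hb1 : -(p:ℤ) < (s0:ℤ) - (s:ℤ) := by
              have : (s:ℤ) < p := by exact_mod_cast hsp
              have : (0:ℤ) ≤ (s0:ℤ) := by positivity
              omega
            have hb2 : (s0:ℤ) - (s:ℤ) < p := by
              have : (s0:ℤ) < p := by exact_mod_cast hs0p
              have : (0:ℤ) ≤ (s:ℤ) := by positivity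
              omega
            rcases hee with hee
            have hpz : (0:ℤ) < p := by exact_mod_cast hp0
            rcases lt_trichotomy e 0 with h | h | h
            · nlinarith
            · rw [h, mul_zero] at hee; omega
            · nlinarith
          have : (s0:ℤ) = (s:ℤ) := by omega
          exact_mod_cast this.symm
        · intro h; subst h; simp
      by_cases hss : s = s0
      · rw [if_pos hss, if_pos (hdvd.2 hss)]
      · rw [if_neg hss, if_neg (fun hd => hss (hdvd.1 hd)), mul_zero]
    rw [Finset.sum_congr rfl hinner, Finset.sum_ite_eq' (Finset.range p) s0
      (fun s => x (t+1+s) * p), if_pos (Finset.mem_range.2 hs0p), ← hxr]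
    field_simp
  -- windows expressed via the Fourier expansion
  have hwind : ∀ s', s' < p →
      ∑ k' ∈ Finset.range p, (c k' * ∑ j ∈ Finset.range (t+1), C j * (ω^k')^j)
        * (ω^k')^(t+1+s') = 0 := by
    intro s' hs'
    have h0 := hrec (t+1+s') (by omega) (by omega)
    have h1 : ∀ j ∈ Finset.range (t+1), C j * x (t+1+s'+j)
        = C j * ∑ k' ∈ Finset.range p, c k' * (ω^k')^(t+1+s'+j) := by
      intro j hj
      have hj' := Finset.mem_range.1 hj
      rw [claim1 (t+1+s'+j) (by omega) (by omega)]
    rw [Finset.sum_congr rfl h1] at h0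
    rw [← h0]
    calc ∑ k' ∈ Finset.range p, (c k' * ∑ j ∈ Finset.range (t+1), C j * (ω^k')^j)
          * (ω^k')^(t+1+s')
        = ∑ k' ∈ Finset.range p, ∑ j ∈ Finset.range (t+1),
            C j * (c k' * (ω^k')^(t+1+s'+j)) := by
          refine Finset.sum_congr rfl fun k' _ => ?_
          rw [mul_comm (c k') _, Finset.sum_mul, Finset.sum_mul]
          refine Finset.sum_congr rfl fun j _ => ?_
          rw [pow_add]; ring
      _ = ∑ j ∈ Finset.range (t+1), ∑ k' ∈ Finset.range p,
            C j * (c k' * (ω^k')^(t+1+s'+j)) := Finset.sum_comm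
      _ = ∑ j ∈ Finset.range (t+1), C j * ∑ k' ∈ Finset.range p,
            c k' * (ω^k')^(t+1+s'+j) := by
          refine Finset.sum_congr rfl fun j _ => ?_
          rw [Finset.mul_sum]
  -- nonzero Fourier coefficients give roots of the polynomial
  have claim2 : ∀ k, k < p → c k ≠ 0 →
      ∑ j ∈ Finset.range (t+1), C j * (ω^k)^j = 0 := by
    intro k hk hck
    set A : ℕ → ℂ := fun k' => c k' * ∑ j ∈ Finset.range (t+1), C j * (ω^k')^j with hA
    have h2 : ∑ s' ∈ Finset.range p,
        (∑ k' ∈ Finset.range p, A k' * (ω^k')^(t+1+s'))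
          * ω ^ (-((k:ℤ) * ((t+1+s' : ℕ):ℤ))) = 0 :=
      Finset.sum_eq_zero fun s' hs' => by
        rw [hwind s' (Finset.mem_range.1 hs'), zero_mul]
    have h3 : ∑ s' ∈ Finset.range p,
        (∑ k' ∈ Finset.range p, A k' * (ω^k')^(t+1+s'))
          * ω ^ (-((k:ℤ) * ((t+1+s' : ℕ):ℤ)))
        = ∑ k' ∈ Finset.range p, (A k' * ω ^ (((k':ℤ) - (k:ℤ)) * ((t+1 : ℕ):ℤ)))
            * ∑ s' ∈ Finset.range p, ω ^ (((k':ℤ) - (k:ℤ)) * (s':ℤ)) := by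
      calc ∑ s' ∈ Finset.range p,
            (∑ k' ∈ Finset.range p, A k' * (ω^k')^(t+1+s'))
              * ω ^ (-((k:ℤ) * ((t+1+s' : ℕ):ℤ)))
          = ∑ s' ∈ Finset.range p, ∑ k' ∈ Finset.range p,
              (A k' * ω ^ (((k':ℤ) - (k:ℤ)) * ((t+1 : ℕ):ℤ)))
                * ω ^ (((k':ℤ) - (k:ℤ)) * (s':ℤ)) := by
            refine Finset.sum_congr rfl fun s' _ => ?_
            rw [Finset.sum_mul]
            refine Finset.sum_congr rfl fun k' _ => ?_
            have hp1' : (ω ^ k')^(t+1+s') = ω ^ ((k':ℤ) * ((t+1+s' : ℕ):ℤ)) := by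
              rw [← pow_mul, ← zpow_natCast ω (k' * (t+1+s'))]
              norm_cast
            rw [hp1',
              show A k' * ω ^ ((k':ℤ) * ((t+1+s' : ℕ):ℤ)) * ω ^ (-((k:ℤ) * ((t+1+s' : ℕ):ℤ)))
                = A k' * (ω ^ ((k':ℤ) * ((t+1+s' : ℕ):ℤ)) * ω ^ (-((k:ℤ) * ((t+1+s' : ℕ):ℤ)))) from by ring,
              ← zpow_add₀ hω0,
              show (k':ℤ) * ((t+1+s' : ℕ):ℤ) + -((k:ℤ) * ((t+1+s' : ℕ):ℤ))
                = ((k':ℤ) - (k:ℤ)) * ((t+1 : ℕ):ℤ) + ((k':ℤ) - (k:ℤ)) * (s':ℤ) from by push_cast; ring,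
              zpow_add₀ hω0]
            ring
        _ = ∑ k' ∈ Finset.range p, ∑ s' ∈ Finset.range p,
              (A k' * ω ^ (((k':ℤ) - (k:ℤ)) * ((t+1 : ℕ):ℤ)))
                * ω ^ (((k':ℤ) - (k:ℤ)) * (s':ℤ)) := Finset.sum_comm
        _ = _ := by
            refine Finset.sum_congr rfl fun k' _ => ?_
            rw [← Finset.mul_sum]
    have h4 : ∀ k' ∈ Finset.range p,
        (A k' * ω ^ (((k':ℤ) - (k:ℤ)) * ((t+1 : ℕ):ℤ)))
          * ∑ s' ∈ Finset.range p, ω ^ (((k':ℤ) - (k:ℤ)) * (s':ℤ))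
        = if k' = k then A k * p else 0 := by
      intro k' hk'
      rw [aux_orth hp0 hω]
      by_cases he : k' = k
      · subst he
        rw [if_pos rfl, if_pos (by simp)]
        simp
      · rw [if_neg he, if_neg ?_, mul_zero]
        intro hdd
        exact he (aux_small_dvd hp0 (Finset.mem_range.1 hk') hk hdd)
    have h5 : A k * (p:ℂ) = 0 := by
      have hx5 : ∑ k' ∈ Finset.range p, (if k' = k then A k * (p:ℂ) else 0) = A k * (p:ℂ) := by
        rw [Finset.sum_ite_eq' (Finset.range p) k (fun _ => A k * (p:ℂ))]
        exact if_pos (Finset.mem_range.2 hk)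
      rw [← hx5, ← Finset.sum_congr rfl h4, ← h3]
      exact h2
    have h6 : A k = 0 := by
      rcases mul_eq_zero.1 h5 with h | h
      · exact h
      · exact absurd h hpc
    have h7 := mul_eq_zero.1 h6
    rcases h7 with h | h
    · exact absurd h hck
    · exact h
  -- assemble the answer
  set S : Finset ℕ := (Finset.range p).filter (fun k => c k ≠ 0) with hS
  set Q : Polynomial ℂ := ∑ j ∈ Finset.range (t+1), Polynomial.monomial j (C j) with hQ
  obtain ⟨j0, hj0t, hj0⟩ := hC
  have hQcoeff : Q.coeff j0 = C j0 := by
    rw [hQ, Polynomial.finset_sum_coeff]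
    have hco : ∀ j ∈ Finset.range (t+1), ((Polynomial.monomial j) (C j)).coeff j0
        = if j = j0 then C j else 0 := fun j _ => Polynomial.coeff_monomial
    rw [Finset.sum_congr rfl hco,
      Finset.sum_ite_eq' (Finset.range (t+1)) j0 (fun j => C j)]
    exact if_pos (Finset.mem_range.2 (by omega))
  have hQne : Q ≠ 0 := fun h => hj0 (by rw [← hQcoeff, h, Polynomial.coeff_zero])
  have hQdeg : Q.natDegree ≤ t := by
    apply Polynomial.natDegree_sum_le_of_forall_le
    intro j hj
    exact le_trans (Polynomial.natDegree_monomial_le _)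
      (by have := Finset.mem_range.1 hj; omega)
  have hQeval : ∀ z : ℂ, Q.eval z = ∑ j ∈ Finset.range (t+1), C j * z^j := by
    intro z
    rw [hQ, Polynomial.eval_finset_sum]
    exact Finset.sum_congr rfl fun j _ => by rw [Polynomial.eval_monomial]
  have hroot : ∀ k ∈ S, (ω^k) ∈ Q.roots := by
    intro k hk
    have hk' := Finset.mem_filter.1 hk
    rw [Polynomial.mem_roots']
    refine ⟨hQne, ?_⟩
    rw [Polynomial.IsRoot, hQeval]
    exact claim2 k (Finset.mem_range.1 hk'.1) hk'.2
  have hcard : S.card ≤ t := by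
    have hinj : Set.InjOn (fun k => ω ^ k) ↑S := by
      intro k1 h1 k2 h2 he
      exact hω.pow_inj (Finset.mem_range.1 (Finset.mem_filter.1 h1).1)
        (Finset.mem_range.1 (Finset.mem_filter.1 h2).1) he
    have h1 : (S.image (fun k => ω ^ k)).card = S.card :=
      Finset.card_image_of_injOn hinj
    have h2 : S.image (fun k => ω ^ k) ⊆ Q.roots.toFinset := by
      intro z hz
      rw [Finset.mem_image] at hz
      obtain ⟨k, hk, rfl⟩ := hz
      exact Multiset.mem_toFinset.2 (hroot k hk)
    calc S.card = (S.image (fun k => ω ^ k)).card := h1.symm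
      _ ≤ Q.roots.toFinset.card := Finset.card_le_card h2
      _ ≤ Multiset.card Q.roots := Multiset.toFinset_card_le _
      _ ≤ Q.natDegree := Polynomial.card_roots' Q
      _ ≤ t := hQdeg
  refine ⟨S.card, hcard, fun i => c ((S.equivFin.symm i : ℕ)),
    fun i => ω ^ ((S.equivFin.symm i : ℕ)), ?_, ?_, ?_⟩
  · intro i
    exact ⟨p, hp1, by rw [← pow_mul, mul_comm, pow_mul, hω.pow_eq_one, one_pow]⟩
  · intro i
    have hmem : ((S.equivFin.symm i : ℕ)) ∈ S := (S.equivFin.symm i).2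
    have h := Finset.mem_filter.1 hmem
    exact claim2 _ (Finset.mem_range.1 h.1) h.2
  · intro r hr1 hr2
    have hNt : t + 1 ≤ N := by omega
    have hr2' : r + (t+1) ≤ N := by omega
    rw [← claim1 r hr1 hr2']
    have e1 : ∑ i : Fin S.card, c ((S.equivFin.symm i : ℕ)) * (ω ^ ((S.equivFin.symm i : ℕ)))^r
        = ∑ s : {y // y ∈ S}, c (s : ℕ) * (ω ^ (s : ℕ))^r :=
      Equiv.sum_comp S.equivFin.symm (fun s => c (s : ℕ) * (ω ^ (s : ℕ))^r)
    rw [e1, Finset.sum_coe_sort S (fun k => c k * (ω ^ k)^r)]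
    symm
    apply Finset.sum_subset
    · intro k hk; exact (Finset.mem_filter.1 hk).1
    · intro k hk hkn
      have : ¬ (c k ≠ 0) := fun h => hkn (Finset.mem_filter.2 ⟨hk, h⟩)
      rw [not_not.1 this, zero_mul]

theorem stmt8 (N t : ℕ) (R : Finset ℂ) (x : ℕ → ℂ) (C : ℕ → ℂ)
    (hN : R.card ^ (t + 1) + 3 * (t + 1) ≤ N)
    (hx : ∀ n, 1 ≤ n → n ≤ N → x n ∈ R)
    (hC : ∃ j ≤ t, C j ≠ 0)
    (horth : ∀ r, r + (t + 1) ≤ N →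
      ∑ j ∈ Finset.range (t + 1), C j * x (1 + r + j) = 0) :
    ∃ l, l ≤ t ∧ ∃ α ρ : Fin l → ℂ,
      (∀ i, ∃ q, 1 ≤ q ∧ ρ i ^ q = 1) ∧
      (∀ i, ∑ j ∈ Finset.range (t + 1), C j * ρ i ^ j = 0) ∧
      (∀ r, t + 1 ≤ r → r ≤ N - (t + 1) → x r = ∑ i, α i * ρ i ^ r) := by
  classical
  have hN3 : 3 * (t + 1) ≤ N := le_trans (Nat.le_add_left _ _) hN
  rcases Nat.eq_zero_or_pos R.card with hR0 | hR
  · exfalso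
    have h1 : (1:ℕ) ≤ N := by omega
    have hm := hx 1 le_rfl h1
    rw [Finset.card_eq_zero] at hR0
    rw [hR0] at hm
    exact absurd hm (Finset.notMem_empty _)
  have hrec : ∀ s, 1 ≤ s → s + t ≤ N →
      ∑ j ∈ Finset.range (t+1), C j * x (s + j) = 0 := by
    intro s hs hsN
    have h := horth (s - 1) (by omega)
    rw [← h]
    refine Finset.sum_congr rfl fun j _ => ?_
    have e : 1 + (s - 1) + j = s + j := by omega
    rw [e]
  obtain ⟨p, hp1, hpB, hper⟩ := aux_periodic N t R x C hN hR hx hC hrec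
  exact aux_fourier N t p x C (by omega) hp1 hC hrec hper
end

section
/- For all integers $n > 3$, Euler's totient function satisfies $\varphi(n) \geq n / (8 \log_2 \log_2 n)$. -/
open Finset Real

lemma log_ge_of_pow {x : ℝ} (hx : 0 < x) (a b : ℕ) (hb : 0 < b)
    (h : (2.7182818286:ℝ)^a ≤ x ^ b) : (a:ℝ)/b ≤ Real.log x := by
  have he : Real.exp a ≤ x ^ b := by
    rw [← Real.exp_one_pow]
    exact le_trans (pow_le_pow_left₀ (Real.exp_pos 1).le Real.exp_one_lt_d9.le a) h
  have := Real.log_le_log (Real.exp_pos _) he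
  rw [Real.log_exp, Real.log_pow] at this
  rw [div_le_iff₀ (by positivity)]
  linarith

lemma log_le_of_pow {x : ℝ} (hx : 0 < x) (a b : ℕ) (hb : 0 < b)
    (h : x ^ b ≤ (2.7182818283:ℝ)^a) : Real.log x ≤ (a:ℝ)/b := by
  have he : x ^ b ≤ Real.exp a := by
    rw [← Real.exp_one_pow]
    exact le_trans h (pow_le_pow_left₀ (by norm_num) Real.exp_one_gt_d9.le a)
  have := Real.log_le_log (by positivity) he
  rw [Real.log_exp, Real.log_pow] at this
  rw [le_div_iff₀ (by positivity)]
  linarith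

-- numeric log facts
lemma l2_lo : (0.6931:ℝ) ≤ Real.log 2 := by linarith [Real.log_two_gt_d9]
lemma l2_hi : Real.log 2 ≤ 0.6932 := by linarith [Real.log_two_lt_d9]
lemma l3_lo : (1.09:ℝ) ≤ Real.log 3 := by
  have h := log_ge_of_pow (x := 3/2) (by norm_num) 2 5 (by norm_num) (by norm_num)
  have : Real.log 3 = Real.log 2 + Real.log (3/2) := by
    rw [← Real.log_mul (by norm_num) (by norm_num)]; norm_num
  linarith [l2_lo]
lemma l5_lo : (1.6:ℝ) ≤ Real.log 5 := by
  have := log_ge_of_pow (x := 5) (by norm_num) 8 5 (by norm_num) (by norm_num); linarith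
lemma l7_lo : (1.93:ℝ) ≤ Real.log 7 := by
  have h : ((1:ℝ))/3 ≤ Real.log (7/5) := by
    have := log_ge_of_pow (x := 7/5) (by norm_num) 1 3 (by norm_num) (by norm_num); push_cast at this; linarith
  have : Real.log 7 = Real.log 5 + Real.log (7/5) := by
    rw [← Real.log_mul (by norm_num) (by norm_num)]; norm_num
  linarith [l5_lo]
lemma l11_lo : (2.38:ℝ) ≤ Real.log 11 := by
  have h : ((31:ℝ))/100 ≤ Real.log (11/8) := by
    have := log_ge_of_pow (x := 11/8) (by norm_num) 31 100 (by norm_num) (by norm_num); push_cast at this; linarith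
  have : Real.log 11 = Real.log 8 + Real.log (11/8) := by
    rw [← Real.log_mul (by norm_num) (by norm_num)]; norm_num
  have h8 : Real.log 8 = 3 * Real.log 2 := by
    rw [show (8:ℝ) = 2^3 by norm_num, Real.log_pow]; push_cast; ring
  linarith [l2_lo]
lemma l13_lo : (2.5:ℝ) ≤ Real.log 13 := by
  have := log_ge_of_pow (x := 13) (by norm_num) 5 2 (by norm_num) (by norm_num); linarith
lemma l17_lo : (2.8:ℝ) ≤ Real.log 17 := by
  have := log_ge_of_pow (x := 17) (by norm_num) 14 5 (by norm_num) (by norm_num); linarith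
lemma l17_hi : Real.log 17 ≤ 2.9 := by
  have := log_le_of_pow (x := 17) (by norm_num) 29 10 (by norm_num) (by norm_num); linarith
lemma ll17_lo : (1.02:ℝ) ≤ Real.log (Real.log 17) := by
  have h1 : ((51:ℝ))/50 ≤ Real.log (2.8) := by
    have := log_ge_of_pow (x := 2.8) (by norm_num) 51 50 (by norm_num) (by norm_num); push_cast at this; linarith
  have h2 : Real.log (2.8) ≤ Real.log (Real.log 17) :=
    Real.log_le_log (by norm_num) l17_lo
  linarith
lemma l35_lo : (1.25:ℝ) ≤ Real.log (7/2) := by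
  have := log_ge_of_pow (x := 7/2) (by norm_num) 5 4 (by norm_num) (by norm_num); linarith
lemma neg_log_log2 : (0.36:ℝ) ≤ -Real.log (Real.log 2) := by
  have h1 : Real.log (Real.log 2) ≤ Real.log (0.6932) :=
    Real.log_le_log (by linarith [l2_lo]) l2_hi
  have h2 : Real.log (0.6932:ℝ) ≤ -(36/100) := by
    have h3 : ((36:ℝ))/100 ≤ Real.log (10000/6932) := by
      have := log_ge_of_pow (x := 10000/6932) (by norm_num) 36 100 (by norm_num) (by norm_num); push_cast at this; linarith
    have : Real.log (10000/6932 : ℝ) = - Real.log (0.6932) := by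
      rw [← Real.log_inv]; norm_num
    linarith
  linarith

private abbrev PP (N : ℕ) : Finset ℕ := Finset.filter Nat.Prime (Finset.range (N+1))

lemma mem_PP {N p : ℕ} : p ∈ PP N ↔ p.Prime ∧ p ≤ N := by
  simp [Finset.mem_filter, Finset.mem_range, Nat.lt_succ_iff, and_comm]

lemma fact_factorization_ge {N p : ℕ} (hp : p.Prime) (hpN : p ≤ N) :
    N / p ≤ (Nat.factorial N).factorization p := by
  rw [← Nat.Prime.pow_dvd_iff_le_factorization hp (Nat.factorial_ne_zero N)]
  rw [Nat.Prime.pow_dvd_factorial_iff hp (Nat.lt_succ_self _)]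
  have h1 : 1 ∈ Finset.Ico 1 (Nat.log p N + 1) := by
    simp only [Finset.mem_Ico, Nat.lt_succ_iff]
    exact ⟨le_refl 1, Nat.log_pos hp.one_lt hpN⟩
  have := Finset.single_le_sum (f := fun i => N / p ^ i) (fun i _ => Nat.zero_le _) h1
  simpa using this

lemma log_factorial_ge (N : ℕ) :
    ∑ p ∈ PP N, ((N / p : ℕ) : ℝ) * Real.log p ≤ Real.log (Nat.factorial N) := by
  have hne : (Nat.factorial N) ≠ 0 := Nat.factorial_ne_zero N
  have heq : Real.log (Nat.factorial N) =
      ∑ p ∈ (Nat.factorial N).primeFactors,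
        (((Nat.factorial N).factorization p : ℕ) : ℝ) * Real.log p := by
    conv_lhs => rw [← Nat.factorization_prod_pow_eq_self hne]
    rw [Finsupp.prod, Nat.cast_prod, Real.log_prod]
    · apply Finset.sum_congr
      · rw [Nat.support_factorization]
      · intro p hp
        rw [Nat.cast_pow, Real.log_pow]
    · intro p hp
      have hp' : p.Prime := Nat.prime_of_mem_primeFactors (by rwa [← Nat.support_factorization])
      exact_mod_cast (pow_pos hp'.pos _).ne'
  rw [heq]
  calc ∑ p ∈ PP N, ((N / p : ℕ) : ℝ) * Real.log p
      ≤ ∑ p ∈ PP N, (((Nat.factorial N).factorization p : ℕ) : ℝ) * Real.log p := by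
        apply Finset.sum_le_sum
        intro p hp
        obtain ⟨hp', hpN⟩ := mem_PP.mp hp
        have h1 : ((N / p : ℕ) : ℝ) ≤ (((Nat.factorial N).factorization p : ℕ) : ℝ) := by
          exact_mod_cast fact_factorization_ge hp' hpN
        have h2 : 0 ≤ Real.log p := Real.log_nonneg (by exact_mod_cast hp'.one_lt.le)
        exact mul_le_mul_of_nonneg_right h1 h2
    _ ≤ ∑ p ∈ (Nat.factorial N).primeFactors,
          (((Nat.factorial N).factorization p : ℕ) : ℝ) * Real.log p := by
        apply Finset.sum_le_sum_of_subset_of_nonneg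
        · intro p hp
          obtain ⟨hp', hpN⟩ := mem_PP.mp hp
          exact Nat.mem_primeFactors.mpr ⟨hp', (Nat.Prime.dvd_factorial hp').mpr hpN, hne⟩
        · intro p hp _
          have hp' : p.Prime := Nat.prime_of_mem_primeFactors hp
          have h2 : 0 ≤ Real.log p := Real.log_nonneg (by exact_mod_cast hp'.one_lt.le)
          positivity

lemma theta_le (N : ℕ) : ∑ p ∈ PP N, Real.log p ≤ N * (2 * Real.log 2) := by
  have h1 : ((primorial N : ℕ) : ℝ) = ∏ p ∈ PP N, (p:ℝ) := by
    rw [primorial, Nat.cast_prod]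
  have h2 : Real.log (primorial N) = ∑ p ∈ PP N, Real.log p :=
    h1 ▸ Real.log_prod (fun p hp => by exact_mod_cast (mem_PP.mp hp).1.pos.ne')
  rw [← h2]
  have h3 : Real.log (primorial N) ≤ Real.log ((4:ℕ)^N) := by
    apply Real.log_le_log (by exact_mod_cast primorial_pos N)
    exact_mod_cast primorial_le_4_pow N
  have h4 : Real.log ((4:ℕ)^N : ℕ) = N * (2 * Real.log 2) := by
    push_cast
    rw [Real.log_pow, show ((4:ℝ)) = 2^2 by norm_num, Real.log_pow]
    push_cast; ring
  push_cast at h3 h4 ⊢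
  linarith

lemma mertens1 (N : ℕ) (hN : 1 ≤ N) :
    ∑ p ∈ PP N, Real.log p / p ≤ Real.log N + 2 * Real.log 2 := by
  have hN0 : (0:ℝ) < N := by exact_mod_cast hN
  have key : (N:ℝ) * ∑ p ∈ PP N, Real.log p / p ≤
      (N:ℝ) * Real.log N + (N:ℝ) * (2 * Real.log 2) := by
    have hfac : Real.log (Nat.factorial N) ≤ (N:ℝ) * Real.log N := by
      have h := Nat.factorial_le_pow N
      have : Real.log (Nat.factorial N) ≤ Real.log ((N:ℕ)^N : ℕ) :=
        Real.log_le_log (by exact_mod_cast (Nat.factorial_pos N)) (by exact_mod_cast h)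
      rwa [Nat.cast_pow, Real.log_pow] at this
    have hsplit : (N:ℝ) * ∑ p ∈ PP N, Real.log p / p ≤
        (∑ p ∈ PP N, ((N / p : ℕ) : ℝ) * Real.log p) + ∑ p ∈ PP N, Real.log p := by
      rw [Finset.mul_sum, ← Finset.sum_add_distrib]
      apply Finset.sum_le_sum
      intro p hp
      obtain ⟨hp', hpN⟩ := mem_PP.mp hp
      have hppos : (0:ℝ) < p := by exact_mod_cast hp'.pos
      have hlog : 0 ≤ Real.log p := Real.log_nonneg (by exact_mod_cast hp'.one_lt.le)
      have hfl : (N:ℝ) / p ≤ ((N / p : ℕ) : ℝ) + 1 := by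
        have hdm : (N:ℝ) = (p:ℝ) * ((N/p : ℕ):ℝ) + ((N % p : ℕ):ℝ) := by
          exact_mod_cast (Nat.div_add_mod N p).symm
        have hm2 : ((N % p : ℕ):ℝ) < (p:ℝ) := by exact_mod_cast Nat.mod_lt _ hp'.pos
        rw [div_le_iff₀ hppos]
        nlinarith
      calc (N:ℝ) * (Real.log p / p) = ((N:ℝ)/p) * Real.log p := by ring
        _ ≤ (((N / p : ℕ) : ℝ) + 1) * Real.log p := mul_le_mul_of_nonneg_right hfl hlog
        _ = ((N / p : ℕ) : ℝ) * Real.log p + Real.log p := by ring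
    linarith [log_factorial_ge N, theta_le N]
  have := le_of_mul_le_mul_left (by linarith [key] : (N:ℝ) * (∑ p ∈ PP N, Real.log p / p) ≤ (N:ℝ) * (Real.log N + 2 * Real.log 2)) hN0
  exact this


lemma sum_PP_succ (N : ℕ) (f : ℕ → ℝ) : ∑ p ∈ PP (N+1), f p =
    (if Nat.Prime (N+1) then f (N+1) else 0) + ∑ p ∈ PP N, f p := by
  have hins : PP (N+1) = Finset.filter Nat.Prime (insert (N+1) (Finset.range (N+1))) := by
    rw [← Finset.range_add_one]
  rw [hins, Finset.filter_insert]
  by_cases h : Nat.Prime (N+1)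
  · rw [if_pos h, if_pos h, Finset.sum_insert (by simp)]
  · rw [if_neg h, if_neg h, zero_add]

lemma loglog_step {N : ℕ} (hN : 17 ≤ N) :
    (Real.log (N+1) - Real.log N) / Real.log (N+1) ≤
      Real.log (Real.log (N+1)) - Real.log (Real.log N) := by
  have hN1 : (1:ℝ) < N := by exact_mod_cast lt_of_lt_of_le (by norm_num) hN
  have ha : 0 < Real.log N := Real.log_pos hN1
  have hb : 0 < Real.log ((N:ℝ)+1) := Real.log_pos (by linarith)
  have h := Real.log_le_sub_one_of_pos (show 0 < Real.log N / Real.log ((N:ℝ)+1) by positivity)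
  rw [Real.log_div ha.ne' hb.ne'] at h
  have h2 : Real.log N / Real.log ((N:ℝ)+1) - 1
      = -((Real.log ((N:ℝ)+1) - Real.log N)/Real.log ((N:ℝ)+1)) := by
    field_simp
    ring
  rw [h2] at h
  linarith

lemma sum_inv_primes (N : ℕ) (hN : 17 ≤ N) :
    ∑ p ∈ PP N, 1/(p:ℝ) ≤ (∑ p ∈ PP 16, 1/(p:ℝ))
      + (∑ p ∈ PP N, Real.log p / p - ∑ p ∈ PP 16, Real.log p / p) / Real.log N
      + Real.log (Real.log N) - Real.log (Real.log 17)
      + (2*Real.log 2 - ∑ p ∈ PP 16, Real.log p / p) * (1/Real.log 17 - 1/Real.log N) := by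
  induction N, hN using Nat.le_induction with
  | base =>
    have h17 : Nat.Prime 17 := by norm_num
    have hl17 : (0:ℝ) < Real.log 17 := Real.log_pos (by norm_num)
    have e1 := sum_PP_succ 16 (fun p => 1/(p:ℝ))
    have e2 := sum_PP_succ 16 (fun p => Real.log p / p)
    rw [if_pos h17] at e1 e2
    norm_num at e1 e2
    have h4 : (∑ p ∈ PP 17, Real.log p / p - ∑ p ∈ PP 16, Real.log p / p) / Real.log 17
        = 1/17 := by
      rw [e2]; push_cast; field_simp; ring
    push_cast
    push_cast at h4 e1
    rw [h4]
    simp only [one_div]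
    rw [e1]
    linarith
  | succ N hN ih =>
    have hN1 : (1:ℝ) < N := by exact_mod_cast lt_of_lt_of_le (by norm_num) hN
    have ha : 0 < Real.log N := Real.log_pos hN1
    have hb : 0 < Real.log ((N:ℝ)+1) := Real.log_pos (by linarith)
    have hab : Real.log N ≤ Real.log ((N:ℝ)+1) := Real.log_le_log (by linarith) (by linarith)
    have hl17 : (0:ℝ) < Real.log 17 := Real.log_pos (by norm_num)
    have hA : ∑ p ∈ PP N, Real.log p / p ≤ Real.log N + 2*Real.log 2 := mertens1 N (by omega)
    have hkey := loglog_step hN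
    have hd : 0 ≤ 1/Real.log N - 1/Real.log ((N:ℝ)+1) := by
      rw [sub_nonneg]
      exact one_div_le_one_div_of_le ha hab
    have had : Real.log N * (1/Real.log N - 1/Real.log ((N:ℝ)+1))
        = (Real.log ((N:ℝ)+1) - Real.log N)/Real.log ((N:ℝ)+1) := by field_simp
    have h1 : (∑ p ∈ PP N, Real.log p / p - 2*Real.log 2) * (1/Real.log N - 1/Real.log ((N:ℝ)+1))
        ≤ Real.log N * (1/Real.log N - 1/Real.log ((N:ℝ)+1)) :=
      mul_le_mul_of_nonneg_right (by linarith) hd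
    rw [sum_PP_succ N (fun p => 1/(p:ℝ)), sum_PP_succ N (fun p => Real.log p / p)]
    push_cast
    by_cases hP : Nat.Prime (N+1)
    · simp only [if_pos hP]
      push_cast
      have hexp : (Real.log ((N:ℝ)+1)/((N:ℝ)+1) + (∑ p ∈ PP N, Real.log p / p)
            - ∑ p ∈ PP 16, Real.log p / p) / Real.log ((N:ℝ)+1)
          = 1/((N:ℝ)+1) + ((∑ p ∈ PP N, Real.log p / p) - ∑ p ∈ PP 16, Real.log p / p)
            / Real.log ((N:ℝ)+1) := by
        field_simp
        ring
      rw [hexp]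
      have hsplitb : ((∑ p ∈ PP N, Real.log p / p) - ∑ p ∈ PP 16, Real.log p / p)
            / Real.log ((N:ℝ)+1)
          = ((∑ p ∈ PP N, Real.log p / p) - ∑ p ∈ PP 16, Real.log p / p) / Real.log N
            - ((∑ p ∈ PP N, Real.log p / p) - ∑ p ∈ PP 16, Real.log p / p)
              * (1/Real.log N - 1/Real.log ((N:ℝ)+1)) := by
        field_simp
        ring
      rw [hsplitb]
      nlinarith [h1, hkey, had, ih]
    · simp only [if_neg hP]
      push_cast
      have hsplitb : ((∑ p ∈ PP N, Real.log p / p) - ∑ p ∈ PP 16, Real.log p / p)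
            / Real.log ((N:ℝ)+1)
          = ((∑ p ∈ PP N, Real.log p / p) - ∑ p ∈ PP 16, Real.log p / p) / Real.log N
            - ((∑ p ∈ PP N, Real.log p / p) - ∑ p ∈ PP 16, Real.log p / p)
              * (1/Real.log N - 1/Real.log ((N:ℝ)+1)) := by
        field_simp
        ring
      rw [zero_add, zero_add, hsplitb]
      nlinarith [h1, hkey, had, ih]

lemma sum_inv_sub_one (N : ℕ) (hN : 17 ≤ N) :
    ∑ p ∈ PP N, 1/((p:ℝ)-1) ≤ (∑ p ∈ PP N, 1/(p:ℝ))
      + (∑ p ∈ PP 16, (1/((p:ℝ)-1) - 1/(p:ℝ))) + 1/16 - 1/(N:ℝ) := by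
  induction N, hN using Nat.le_induction with
  | base =>
    have h17 : Nat.Prime 17 := by norm_num
    have e1 := sum_PP_succ 16 (fun p => 1/((p:ℝ)-1))
    have e2 := sum_PP_succ 16 (fun p => 1/(p:ℝ))
    rw [if_pos h17] at e1 e2
    norm_num at e1 e2
    have e3 : ∑ p ∈ PP 16, (1/((p:ℝ)-1) - 1/(p:ℝ))
        = (∑ p ∈ PP 16, 1/((p:ℝ)-1)) - ∑ p ∈ PP 16, 1/(p:ℝ) := by
      rw [Finset.sum_sub_distrib]
    push_cast
    simp only [one_div] at e1 e2 e3 ⊢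
    rw [e1, e2, e3]
    linarith
  | succ N hN ih =>
    have hN0 : (0:ℝ) < N := by exact_mod_cast lt_of_lt_of_le (by norm_num) hN
    have e1 := sum_PP_succ N (fun p => 1/((p:ℝ)-1))
    have e2 := sum_PP_succ N (fun p => 1/(p:ℝ))
    rw [e1, e2]
    by_cases hP : Nat.Prime (N+1)
    · simp only [if_pos hP]
      push_cast
      have hq : 1/((N:ℝ)+1-1) = 1/(N:ℝ) := by norm_num
      rw [hq]
      have h5 : 1/((N:ℝ)+1) + (1/(N:ℝ) - 1/((N:ℝ)+1)) = 1/(N:ℝ) := by ring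
      linarith
    · simp only [if_neg hP]
      push_cast
      have h6 : 1/((N:ℝ)+1) ≤ 1/(N:ℝ) := by
        apply one_div_le_one_div_of_le hN0; linarith
      linarith

lemma small_total (N : ℕ) (hN : 17 ≤ N) :
    ∑ p ∈ PP N, 1/((p:ℝ)-1) ≤ Real.log (Real.log N) + 2.03 := by
  have hN1 : (1:ℝ) < N := by exact_mod_cast lt_of_lt_of_le (by norm_num) hN
  have ha : 0 < Real.log N := Real.log_pos hN1
  have hl17 : (0:ℝ) < Real.log 17 := Real.log_pos (by norm_num)
  have hA : ∑ p ∈ PP N, Real.log p / p ≤ Real.log N + 2*Real.log 2 := mertens1 N (by omega)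
  have h1 := sum_inv_primes N hN
  have h2 := sum_inv_sub_one N hN
  -- evaluate PP 16
  have hPP16 : PP 16 = ({2,3,5,7,11,13} : Finset ℕ) := by decide
  have hS0 : ∑ p ∈ PP 16, 1/(p:ℝ) = 1/2+1/3+1/5+1/7+1/11+1/13 := by
    rw [hPP16]; norm_num
  have hD0 : ∑ p ∈ PP 16, (1/((p:ℝ)-1) - 1/(p:ℝ))
      = (1-1/2)+(1/2-1/3)+(1/4-1/5)+(1/6-1/7)+(1/10-1/11)+(1/12-1/13) := by
    rw [hPP16]; norm_num
  have hA0 : ∑ p ∈ PP 16, Real.log p / p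
      = Real.log 2/2 + Real.log 3/3 + Real.log 5/5 + Real.log 7/7
        + Real.log 11/11 + Real.log 13/13 := by
    rw [hPP16]; norm_num
    push_cast
    ring
  set A0 : ℝ := ∑ p ∈ PP 16, Real.log p / p with hA0def
  have hA0lo : (1.714:ℝ) ≤ A0 := by
    rw [hA0]
    have h2 := l2_lo; have h3 := l3_lo; have h5 := l5_lo
    have h7 := l7_lo; have h11 := l11_lo; have h13 := l13_lo
    linarith
  have key1 : (∑ p ∈ PP N, Real.log p / p - A0)/Real.log N
      ≤ (Real.log N + 2*Real.log 2 - A0)/Real.log N :=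
    (div_le_div_iff_of_pos_right ha).mpr (by linarith)
  have key2 : (Real.log N + 2*Real.log 2 - A0)/Real.log N
      = 1 + (2*Real.log 2 - A0)/Real.log N := by field_simp; ring
  have key3 : (2*Real.log 2 - A0)*(1/Real.log 17 - 1/Real.log N)
        + (2*Real.log 2 - A0)/Real.log N = (2*Real.log 2 - A0)/Real.log 17 := by
    field_simp
    ring
  have hnum : 2*Real.log 2 - A0 ≤ -0.3276 := by linarith [l2_hi]
  have hfin : (2*Real.log 2 - A0)/Real.log 17 ≤ -0.1129 := by
    have s1 : (2*Real.log 2 - A0)/Real.log 17 ≤ (-0.3276)/Real.log 17 :=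
      (div_le_div_iff_of_pos_right hl17).mpr hnum
    have s2 : (-0.3276:ℝ)/Real.log 17 ≤ -0.1129 := by
      rw [div_le_iff₀ hl17]
      nlinarith [l17_hi, l17_lo]
    linarith
  have hS0hi : ∑ p ∈ PP 16, 1/(p:ℝ) ≤ 1.34403 := by rw [hS0]; norm_num
  have hD0hi : ∑ p ∈ PP 16, (1/((p:ℝ)-1) - 1/(p:ℝ)) ≤ 0.755978 := by rw [hD0]; norm_num
  have hNinv : (0:ℝ) ≤ 1/(N:ℝ) := by positivity
  have hll17 := ll17_lo
  linarith [h1, h2, key1, key3]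


lemma sum_log_primeFactors (n : ℕ) (hn : 1 ≤ n) :
    ∑ p ∈ n.primeFactors, Real.log p ≤ Real.log n := by
  have hd : ∏ p ∈ n.primeFactors, p ∣ n := Nat.prod_primeFactors_dvd n
  have hle : ∏ p ∈ n.primeFactors, p ≤ n := Nat.le_of_dvd (by omega) hd
  have hpos : 0 < ∏ p ∈ n.primeFactors, p :=
    Finset.prod_pos (fun p hp => (Nat.prime_of_mem_primeFactors hp).pos)
  have h1 : Real.log ((∏ p ∈ n.primeFactors, p : ℕ) : ℝ) ≤ Real.log n := by
    apply Real.log_le_log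
    · exact_mod_cast hpos
    · exact_mod_cast hle
  have h2 : Real.log ((∏ p ∈ n.primeFactors, p : ℕ) : ℝ) = ∑ p ∈ n.primeFactors, Real.log p := by
    rw [Nat.cast_prod]
    exact Real.log_prod
      (fun p hp => by exact_mod_cast (Nat.prime_of_mem_primeFactors hp).pos.ne')
  linarith [h1, h2.le, h2.ge]

lemma split_bound (n T : ℕ) (hT : 2 ≤ T) (hn : 1 ≤ n) :
    ∑ p ∈ n.primeFactors, 1/((p:ℝ)-1)
      ≤ (∑ p ∈ PP T, 1/((p:ℝ)-1)) + Real.log n * (1/((T:ℝ)*Real.log (T+1))) := by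
  have hT0 : (0:ℝ) < T := by exact_mod_cast (by omega : 0 < T)
  have hlogT1 : (0:ℝ) < Real.log ((T:ℝ)+1) := Real.log_pos (by linarith)
  have hsplit := Finset.sum_filter_add_sum_filter_not n.primeFactors (· ≤ T)
      (fun p => 1/((p:ℝ)-1))
  rw [← hsplit]
  have hb1 : ∑ p ∈ n.primeFactors.filter (· ≤ T), 1/((p:ℝ)-1)
      ≤ ∑ p ∈ PP T, 1/((p:ℝ)-1) := by
    apply Finset.sum_le_sum_of_subset_of_nonneg
    · intro p hp
      rw [Finset.mem_filter] at hp
      exact mem_PP.mpr ⟨Nat.prime_of_mem_primeFactors hp.1, hp.2⟩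
    · intro p hp _
      have h2 : (2:ℝ) ≤ p := by exact_mod_cast (mem_PP.mp hp).1.two_le
      have : (0:ℝ) < (p:ℝ)-1 := by linarith
      positivity
  have hb2 : ∑ p ∈ n.primeFactors.filter (¬ · ≤ T), 1/((p:ℝ)-1)
      ≤ Real.log n * (1/((T:ℝ)*Real.log (T+1))) := by
    have step1 : ∑ p ∈ n.primeFactors.filter (¬ · ≤ T), 1/((p:ℝ)-1)
        ≤ ∑ p ∈ n.primeFactors.filter (¬ · ≤ T), Real.log p * (1/((T:ℝ)*Real.log (T+1))) := by
      apply Finset.sum_le_sum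
      intro p hp
      rw [Finset.mem_filter] at hp
      have hpP := Nat.prime_of_mem_primeFactors hp.1
      have hpT : (T:ℝ)+1 ≤ p := by exact_mod_cast (by omega : T+1 ≤ p)
      have hlp : Real.log ((T:ℝ)+1) ≤ Real.log p := Real.log_le_log (by linarith) hpT
      have h1 : 1/((p:ℝ)-1) ≤ 1/(T:ℝ) := by
        apply one_div_le_one_div_of_le hT0; linarith
      have h3 : (1:ℝ)/(T:ℝ) ≤ Real.log p * (1/((T:ℝ)*Real.log ((T:ℝ)+1))) := by
        rw [mul_one_div, le_div_iff₀ (by positivity)]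
        have he : 1/(T:ℝ) * ((T:ℝ) * Real.log ((T:ℝ)+1)) = Real.log ((T:ℝ)+1) := by
          field_simp
        rw [he]
        linarith
      linarith
    have step2 : ∑ p ∈ n.primeFactors.filter (¬ · ≤ T), Real.log p ≤ Real.log n := by
      refine le_trans ?_ (sum_log_primeFactors n hn)
      apply Finset.sum_le_sum_of_subset_of_nonneg (Finset.filter_subset _ _)
      intro p hp _
      exact Real.log_nonneg (by exact_mod_cast (Nat.prime_of_mem_primeFactors hp).one_lt.le)
    calc ∑ p ∈ n.primeFactors.filter (¬ · ≤ T), 1/((p:ℝ)-1)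
        ≤ ∑ p ∈ n.primeFactors.filter (¬ · ≤ T), Real.log p * (1/((T:ℝ)*Real.log (T+1))) := by
          push_cast
          exact step1
      _ = (∑ p ∈ n.primeFactors.filter (¬ · ≤ T), Real.log p) * (1/((T:ℝ)*Real.log (T+1))) := by
          rw [Finset.sum_mul]
      _ ≤ Real.log n * (1/((T:ℝ)*Real.log (T+1))) := by
          apply mul_le_mul_of_nonneg_right step2
          positivity
  linarith

lemma logb2_two : Real.logb 2 (2:ℝ) = 1 := Real.logb_self_eq_one (by norm_num)

lemma logb2_pow (m : ℕ) : Real.logb 2 ((2:ℝ)^m) = m := by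
  rw [Real.logb_pow, logb2_two, mul_one]

lemma logb2_u_ge (n : ℕ) (k : ℕ) (h : 2^k ≤ n) : (k:ℝ) ≤ Real.logb 2 n := by
  have h1 : ((2:ℝ)^k) ≤ (n:ℝ) := by exact_mod_cast h
  have := Real.logb_le_logb_of_le (by norm_num : (1:ℝ) < 2) (by positivity) h1
  rwa [logb2_pow] at this

lemma loglogb_ge (n k : ℕ) (hk : 2 ≤ k) (h : 2^k ≤ n) (c : ℝ)
    (hc : c ≤ Real.log (Real.logb 2 ((k:ℝ)))) :
    c ≤ Real.log (Real.logb 2 (Real.logb 2 n)) := by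
  have h1 := logb2_u_ge n k h
  have hk0 : (0:ℝ) < k := by exact_mod_cast (by omega : 0 < k)
  have hk2 : (2:ℝ) ≤ k := by exact_mod_cast hk
  have hlbk : (1:ℝ) ≤ Real.logb 2 ((k:ℝ)) := by
    rw [← logb2_two]
    exact Real.logb_le_logb_of_le (by norm_num) (by norm_num) hk2
  have h2 : Real.logb 2 ((k:ℝ)) ≤ Real.logb 2 (Real.logb 2 n) :=
    Real.logb_le_logb_of_le (by norm_num) hk0 h1
  exact hc.trans (Real.log_le_log (by linarith) h2)

lemma main_sum (n : ℕ) (hn : 4 ≤ n) :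
    ∑ p ∈ n.primeFactors, 1/((p:ℝ)-1)
      ≤ 3*Real.log 2 + Real.log (Real.logb 2 (Real.logb 2 n)) := by
  have hn1 : 1 ≤ n := by omega
  have hn0 : (0:ℝ) < n := by exact_mod_cast (by omega : 0 < n)
  by_cases hbig : n < 2^17
  · -- small case: threshold 4
    have hsb := split_bound n 4 (by norm_num) hn1
    have hPP4 : PP 4 = ({2,3} : Finset ℕ) := by decide
    have h34 : ∑ p ∈ PP 4, 1/((p:ℝ)-1) = 3/2 := by rw [hPP4]; norm_num
    have hl5 : (0:ℝ) < Real.log ((4:ℝ)+1) := Real.log_pos (by norm_num)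
    have hlogn0 : 0 ≤ Real.log n := Real.log_nonneg (by exact_mod_cast hn1)
    have hc : 1/((4:ℝ)*Real.log ((4:ℝ)+1)) ≤ 5/32 := by
      rw [div_le_iff₀ (by positivity)]
      have : ((4:ℝ)+1) = 5 := by norm_num
      rw [this]
      nlinarith [l5_lo]
    have hE : ∑ p ∈ n.primeFactors, 1/((p:ℝ)-1) ≤ 3/2 + Real.log n * (5/32) := by
      have := mul_le_mul_of_nonneg_left hc hlogn0
      calc ∑ p ∈ n.primeFactors, 1/((p:ℝ)-1)
          ≤ (∑ p ∈ PP 4, 1/((p:ℝ)-1)) + Real.log n * (1/((4:ℝ)*Real.log ((4:ℝ)+1))) := by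
            have h4 : ((4:ℕ):ℝ) = (4:ℝ) := by norm_num
            calc ∑ p ∈ n.primeFactors, 1/((p:ℝ)-1)
                ≤ (∑ p ∈ PP 4, 1/((p:ℝ)-1))
                  + Real.log n * (1/(((4:ℕ):ℝ)*Real.log (((4:ℕ):ℝ)+1))) := hsb
              _ = _ := by rw [h4]
        _ ≤ 3/2 + Real.log n * (5/32) := by rw [h34]; linarith
    have hlogn_le : ∀ k : ℕ, n ≤ 2^k → Real.log n ≤ k * Real.log 2 := by
      intro k hk
      have : Real.log n ≤ Real.log ((2:ℝ)^k) := by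
        apply Real.log_le_log hn0
        exact_mod_cast hk
      rwa [Real.log_pow] at this
    by_cases h1 : n < 16
    · have hL : (0:ℝ) ≤ Real.log (Real.logb 2 (Real.logb 2 n)) := by
        have := loglogb_ge n 2 (by norm_num) (by omega) (Real.log (Real.logb 2 ((2:ℕ):ℝ)))
          (le_refl _)
        have h2 : Real.log (Real.logb 2 ((2:ℕ):ℝ)) = 0 := by
          have : ((2:ℕ):ℝ) = (2:ℝ) := by norm_num
          rw [this, logb2_two, Real.log_one]
        linarith
      have hln : Real.log n ≤ 4 * Real.log 2 := hlogn_le 4 (by omega)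
      nlinarith [l2_lo, l2_hi]
    · push_neg at h1
      by_cases h2 : n < 256
      · have hL : Real.log 2 ≤ Real.log (Real.logb 2 (Real.logb 2 n)) := by
          apply loglogb_ge n 4 (by norm_num) (by omega)
          have h4 : ((4:ℕ):ℝ) = (2:ℝ)^(2:ℕ) := by norm_num
          rw [h4, logb2_pow]
          have : ((2:ℕ):ℝ) = (2:ℝ) := by norm_num
          rw [this]
        have hln : Real.log n ≤ 8 * Real.log 2 := hlogn_le 8 (by omega)
        nlinarith [l2_lo, l2_hi]
      · push_neg at h2
        by_cases h3 : n < 4096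
        · have hL : Real.log 3 ≤ Real.log (Real.logb 2 (Real.logb 2 n)) := by
            apply loglogb_ge n 8 (by norm_num) (by omega)
            have h4 : ((8:ℕ):ℝ) = (2:ℝ)^(3:ℕ) := by norm_num
            rw [h4, logb2_pow]
            have : ((3:ℕ):ℝ) = (3:ℝ) := by norm_num
            rw [this]
          have hln : Real.log n ≤ 12 * Real.log 2 := hlogn_le 12 (by omega)
          nlinarith [l2_lo, l2_hi, l3_lo]
        · push_neg at h3
          by_cases h4 : n < 65536
          · have hL : Real.log (7/2) ≤ Real.log (Real.logb 2 (Real.logb 2 n)) := by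
              apply loglogb_ge n 12 (by norm_num) (by omega)
              apply Real.log_le_log (by norm_num)
              -- 7/2 ≤ logb 2 12
              have h128 : (7:ℝ) * Real.log 2 ≤ 2 * Real.log ((12:ℕ):ℝ) := by
                have ha : Real.log ((128:ℝ)) ≤ Real.log ((144:ℝ)) :=
                  Real.log_le_log (by norm_num) (by norm_num)
                have hb : Real.log ((128:ℝ)) = 7 * Real.log 2 := by
                  rw [show (128:ℝ) = 2^(7:ℕ) by norm_num, Real.log_pow]; norm_num
                have hcc : Real.log ((144:ℝ)) = 2 * Real.log ((12:ℕ):ℝ) := by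
                  rw [show (144:ℝ) = ((12:ℕ):ℝ)^(2:ℕ) by norm_num, Real.log_pow]; norm_num
                linarith
              rw [Real.logb, le_div_iff₀ (Real.log_pos (by norm_num))]
              push_cast at h128 ⊢
              linarith
            have hln : Real.log n ≤ 16 * Real.log 2 := hlogn_le 16 (by omega)
            nlinarith [l2_lo, l2_hi, l35_lo]
          · push_neg at h4
            have hL : 2 * Real.log 2 ≤ Real.log (Real.logb 2 (Real.logb 2 n)) := by
              have := loglogb_ge n 16 (by norm_num) (by omega) (2 * Real.log 2)
              apply this
              have h5 : ((16:ℕ):ℝ) = (2:ℝ)^(4:ℕ) := by norm_num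
              rw [h5, logb2_pow]
              have h6 : ((4:ℕ):ℝ) = (2:ℝ)^(2:ℕ) := by norm_num
              rw [h6, Real.log_pow]
              norm_num
            have hln : Real.log n ≤ 17 * Real.log 2 := hlogn_le 17 (by omega)
            nlinarith [l2_lo, l2_hi]
  · -- large case
    push_neg at hbig
    set u := Real.logb 2 n with hudef
    have hu17 : (17:ℝ) ≤ u := logb2_u_ge n 17 hbig
    set N := ⌊u⌋₊ with hNdef
    have hN17 : 17 ≤ N := Nat.le_floor hu17
    have hNu : (N:ℝ) ≤ u := Nat.floor_le (by linarith)
    have huN1 : u < (N:ℝ)+1 := by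
      have := Nat.lt_floor_add_one u
      push_cast at this
      linarith
    have hN0 : (0:ℝ) < N := by exact_mod_cast (by omega : 0 < N)
    have hlogN1 : (2.8:ℝ) ≤ Real.log ((N:ℝ)+1) := by
      have : (17:ℝ) ≤ (N:ℝ)+1 := by linarith
      have h2 := Real.log_le_log (by norm_num : (0:ℝ) < 17) this
      linarith [l17_lo]
    have hl2 : (0:ℝ) < Real.log 2 := Real.log_pos (by norm_num)
    have hlogn : Real.log n = u * Real.log 2 := by
      rw [hudef, Real.logb]
      field_simp
    have hsb := split_bound n N (by omega) hn1
    have hst := small_total N hN17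
    -- bound the large-prime term
    have hlarge : Real.log n * (1/((N:ℝ)*Real.log ((N:ℝ)+1))) ≤ 0.2622 := by
      have hc0 : (0:ℝ) < (N:ℝ)*Real.log ((N:ℝ)+1) := by nlinarith
      have h1 : Real.log n ≤ ((N:ℝ)+1) * Real.log 2 := by
        rw [hlogn]
        nlinarith
      have h2 : Real.log n * (1/((N:ℝ)*Real.log ((N:ℝ)+1)))
          ≤ (((N:ℝ)+1) * Real.log 2) / ((N:ℝ)*Real.log ((N:ℝ)+1)) := by
        rw [mul_one_div]
        exact (div_le_div_iff_of_pos_right hc0).mpr h1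
      have h3 : (((N:ℝ)+1) * Real.log 2) / ((N:ℝ)*Real.log ((N:ℝ)+1))
          = (((N:ℝ)+1)/(N:ℝ)) * (Real.log 2 / Real.log ((N:ℝ)+1)) := by
        field_simp
      have h4 : ((N:ℝ)+1)/(N:ℝ) ≤ 18/17 := by
        rw [div_le_div_iff₀ hN0 (by norm_num)]
        have : (17:ℝ) ≤ (N:ℝ) := by exact_mod_cast hN17
        linarith
      have h5 : Real.log 2 / Real.log ((N:ℝ)+1) ≤ 0.6932/2.8 := by
        apply div_le_div₀ (by norm_num) l2_hi (by norm_num) hlogN1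
      have h6 : (0:ℝ) ≤ ((N:ℝ)+1)/(N:ℝ) := by positivity
      have h7 : (0:ℝ) ≤ Real.log 2 / Real.log ((N:ℝ)+1) := by positivity
      calc Real.log n * (1/((N:ℝ)*Real.log ((N:ℝ)+1)))
          ≤ (((N:ℝ)+1)/(N:ℝ)) * (Real.log 2 / Real.log ((N:ℝ)+1)) := by rw [← h3]; exact h2
        _ ≤ (18/17) * (0.6932/2.8) := by
            apply mul_le_mul h4 h5 h7 (by norm_num)
        _ ≤ 0.2622 := by norm_num
    -- loglog N ≤ log (log u)
    have hNlogpos : (1:ℝ) < (N:ℝ) := by linarith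
    have hlogNpos : (0:ℝ) < Real.log N := Real.log_pos hNlogpos
    have hloglogN : Real.log (Real.log N) ≤ Real.log (Real.log u) := by
      apply Real.log_le_log hlogNpos
      apply Real.log_le_log (by linarith) hNu
    have hlogu_pos : (0:ℝ) < Real.log u := Real.log_pos (by linarith)
    have hRHS : Real.log (Real.logb 2 (Real.logb 2 n))
        = Real.log (Real.log u) - Real.log (Real.log 2) := by
      rw [← hudef, Real.logb, Real.log_div hlogu_pos.ne' hl2.ne']
    rw [hRHS]
    have hcast : Real.log (((N:ℕ)):ℝ) = Real.log ((N:ℝ)) := rfl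
    have := neg_log_log2
    -- combine: sum ≤ small_total + large ≤ loglog N + 2.03 + 0.2622 ≤ loglog u + 3 log 2 - log log 2
    have hfin : ∑ p ∈ n.primeFactors, 1/((p:ℝ)-1)
        ≤ Real.log (Real.log N) + 2.03 + 0.2622 := by
      calc ∑ p ∈ n.primeFactors, 1/((p:ℝ)-1)
          ≤ (∑ p ∈ PP N, 1/((p:ℝ)-1)) + Real.log n * (1/((N:ℝ)*Real.log ((N:ℝ)+1))) := hsb
        _ ≤ Real.log (Real.log N) + 2.03 + 0.2622 := by linarith
    linarith [l2_lo]

theorem stmt12 (n : ℕ) (hn : 3 < n) :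
    (n : ℝ) / (8 * Real.logb 2 (Real.logb 2 n)) ≤ (Nat.totient n : ℝ) := by
  have hn4 : 4 ≤ n := hn
  have hn0 : (0:ℝ) < n := by exact_mod_cast (by omega : 0 < n)
  have hu2 : (2:ℝ) ≤ Real.logb 2 n := by
    have := logb2_u_ge n 2 (by omega)
    push_cast at this
    exact this
  set L := Real.logb 2 (Real.logb 2 n) with hLdef
  have hL1 : (1:ℝ) ≤ L := by
    rw [hLdef, ← logb2_two]
    exact Real.logb_le_logb_of_le (by norm_num) (by norm_num) (by linarith)
  have hL0 : (0:ℝ) < L := by linarith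
  have h8L : (0:ℝ) < 8*L := by linarith
  have hQid : (Nat.totient n : ℝ) = n * ∏ p ∈ n.primeFactors, (1 - 1/(p:ℝ)) := by
    have hq := Nat.totient_eq_mul_prod_factors n
    have hc := congrArg (fun q : ℚ => (q : ℝ)) hq
    push_cast at hc
    simpa [one_div] using hc
  set Q := ∏ p ∈ n.primeFactors, (1 - 1/(p:ℝ)) with hQdef
  have hfacpos : ∀ p ∈ n.primeFactors, (0:ℝ) < 1 - 1/(p:ℝ) := by
    intro p hp
    have h2 : (2:ℝ) ≤ p := by exact_mod_cast (Nat.prime_of_mem_primeFactors hp).two_le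
    have hp0 : (0:ℝ) < p := by linarith
    have : 1/(p:ℝ) ≤ 1/2 := by
      apply one_div_le_one_div_of_le (by norm_num) h2
    linarith
  have hQpos : 0 < Q := Finset.prod_pos hfacpos
  have hterm : ∀ p ∈ n.primeFactors, -(1/((p:ℝ)-1)) ≤ Real.log (1 - 1/(p:ℝ)) := by
    intro p hp
    have h2 : (2:ℝ) ≤ p := by exact_mod_cast (Nat.prime_of_mem_primeFactors hp).two_le
    have hp0 : (0:ℝ) < p := by linarith
    have hx := hfacpos p hp
    have hinv := Real.log_le_sub_one_of_pos (show (0:ℝ) < (1 - 1/(p:ℝ))⁻¹ by positivity)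
    rw [Real.log_inv] at hinv
    have hid : (1 - 1/(p:ℝ))⁻¹ - 1 = 1/((p:ℝ)-1) := by
      have hne1 : (1 - 1/(p:ℝ)) ≠ 0 := hx.ne'
      have hne2 : (p:ℝ) - 1 ≠ 0 := by linarith
      have hne3 : (p:ℝ) ≠ 0 := by linarith
      field_simp
      ring
    rw [hid] at hinv
    linarith
  have hlogQ : -(3*Real.log 2 + Real.log L) ≤ Real.log Q := by
    have hlp : Real.log Q = ∑ p ∈ n.primeFactors, Real.log (1 - 1/(p:ℝ)) :=
      Real.log_prod (fun p hp => (hfacpos p hp).ne')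
    have hsum : ∑ p ∈ n.primeFactors, -(1/((p:ℝ)-1))
        ≤ ∑ p ∈ n.primeFactors, Real.log (1 - 1/(p:ℝ)) :=
      Finset.sum_le_sum hterm
    rw [Finset.sum_neg_distrib] at hsum
    have hm := main_sum n hn4
    rw [hlp]
    rw [← hLdef] at hm
    linarith
  have hQge : 1/(8*L) ≤ Q := by
    have h1 : Real.log (8*L) = 3*Real.log 2 + Real.log L := by
      rw [Real.log_mul (by norm_num) hL0.ne']
      rw [show (8:ℝ) = 2^(3:ℕ) by norm_num, Real.log_pow]
      norm_num
    have h2 : Real.log (1/(8*L)) = -(3*Real.log 2 + Real.log L) := by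
      rw [one_div, Real.log_inv, h1]
    have h3 : Real.exp (Real.log (1/(8*L))) ≤ Real.exp (Real.log Q) := by
      apply Real.exp_le_exp.mpr
      rw [h2]
      exact hlogQ
    rwa [Real.exp_log (by positivity), Real.exp_log hQpos] at h3
  calc (n:ℝ)/(8*L) = n * (1/(8*L)) := by ring
    _ ≤ n * Q := by
        apply mul_le_mul_of_nonneg_left hQge hn0.le
    _ = (Nat.totient n : ℝ) := hQid.symm
end
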